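/- arXiv:math/0603570 — 4 statements merged into one kernel-verified Lean document; each statement's English description precedes it below -/
import Mathlib

section
/- Let N ≥ 1, T > 0, let c : ℝ^N × [0,T] → ℝ be continuous satisfying (H1) with constants L1, L1', let u0 : ℝ^N → ℝ be Lipschitz continuous with {x : u0(x) ≥ 0} ⊆ B̄(0,R0) for some R0 > 0, and let u be the continuous viscosity solution of u_t = c(x,t)|Du| with initial datum u0. Then for every t ∈ [0,T]: {x ∈ ℝ^N : u(x,t) ≥ 0} ⊆ B̄(0, R0 + L1' t). -/
set_option maxHeartbeats 1000000


open Set MeasureTheory Filter Metric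
open scoped Topology ENNReal NNReal RealInnerProductSpace symmDiff

noncomputable section

/-- Euclidean space ℝ^N. -/
abbrev Euc (N : ℕ) := EuclideanSpace ℝ (Fin N)

/-- The Fréchet superdifferential D⁺v(x): the set of p with
limsup_{y→x} (v(y) − v(x) − ⟨p, y−x⟩)/|y−x| ≤ 0. -/
def SuperDiff {N : ℕ} (v : Euc N → ℝ) (x : Euc N) : Set (Euc N) :=
  {p | ∀ ε > 0, ∀ᶠ y in 𝓝[≠] x, (v y - v x - ⟪p, y - x⟫) / ‖y - x‖ ≤ ε}

/-- Semiconvexity with constant C: v(x+h) − 2v(x) + v(x−h) ≥ −C|h|². -/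
def Semiconvex {N : ℕ} (C : ℝ) (v : Euc N → ℝ) : Prop :=
  ∀ x h : Euc N, v (x + h) - 2 * v x + v (x - h) ≥ -C * ‖h‖ ^ 2

/-- Viscosity solution of u_t = c(x,t)|Du| on ℝ^N × (0,T) with initial datum u0. -/
def IsViscositySolution (N : ℕ) (T : ℝ) (c u : Euc N → ℝ → ℝ) (u0 : Euc N → ℝ) : Prop :=
  (∀ x, u x 0 = u0 x) ∧
  ∀ φ : Euc N → ℝ → ℝ,
    ContDiff ℝ 1 (fun p : Euc N × ℝ => φ p.1 p.2) →
    ∀ x0 : Euc N, ∀ t0 ∈ Set.Ioo 0 T,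
      (IsLocalMaxOn (fun p : Euc N × ℝ => u p.1 p.2 - φ p.1 p.2)
          (Set.univ ×ˢ Set.Icc 0 T) (x0, t0) →
        deriv (φ x0) t0 ≤ c x0 t0 * ‖gradient (fun x => φ x t0) x0‖) ∧
      (IsLocalMinOn (fun p : Euc N × ℝ => u p.1 p.2 - φ p.1 p.2)
          (Set.univ ×ˢ Set.Icc 0 T) (x0, t0) →
        deriv (φ x0) t0 ≥ c x0 t0 * ‖gradient (fun x => φ x t0) x0‖)

lemma barrier_hasGradient {N : ℕ} (xb : Euc N) (ε lam Kc s₁ B C₂ C₀ t0 : ℝ)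
    (hε : 0 < ε) (x0 : Euc N) :
    HasGradientAt (fun x : Euc N =>
        C₀ + B * Real.exp (lam * (Real.sqrt (‖x - xb‖^2 + ε^2) + Kc*t0 - s₁)) + C₂)
      ((B * Real.exp (lam * (Real.sqrt (‖x0 - xb‖^2 + ε^2) + Kc*t0 - s₁)) * lam
          / Real.sqrt (‖x0 - xb‖^2 + ε^2)) • (x0 - xb)) x0 := by
  have hsq : (0:ℝ) < ‖x0 - xb‖^2 + ε^2 := by positivity
  have hg0pos : 0 < Real.sqrt (‖x0 - xb‖^2 + ε^2) := Real.sqrt_pos.mpr hsq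
  have hf1 : HasFDerivAt (fun x : Euc N => ‖x - xb‖^2) (2 • (innerSL ℝ (x0 - xb))) x0 := by
    have h := ((hasFDerivAt_id x0).sub_const xb).norm_sq
    simpa using h
  have hf2 : HasFDerivAt (fun x : Euc N => ‖x - xb‖^2 + ε^2)
      (2 • (innerSL ℝ (x0 - xb))) x0 := hf1.add_const _
  have hf3 := hf2.sqrt hsq.ne'
  have hf4 := ((hf3.add_const (Kc*t0)).sub_const s₁).const_mul lam
  have hf5 := hf4.exp
  have hf6 := ((hf5.const_mul B).const_add C₀).add_const C₂
  rw [hasGradientAt_iff_hasFDerivAt]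
  refine hf6.congr_fderiv ?_
  ext y
  simp only [InnerProductSpace.toDual_apply_apply, real_inner_smul_left,
    ContinuousLinearMap.smul_apply, innerSL_apply_apply, smul_eq_mul]
  have hsq2 : Real.sqrt (‖x0 - xb‖^2 + ε^2) ^ 2 = ‖x0 - xb‖^2 + ε^2 := Real.sq_sqrt hsq.le
  field_simp
  ring

/-- Key barrier lemma: a uniform negative upper bound on `u xb tb` for all times
`tb ∈ (0,T)` at which `xb` lies at distance at least `δ` beyond `R0 + L1' tb`. -/
lemma keyBarrier (N : ℕ) (T : ℝ) (hT : 0 < T)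
    (c : Euc N → ℝ → ℝ) (L1' : ℝ) (hL1' : 0 < L1')
    (hH1b : ∀ x : Euc N, ∀ t ∈ Set.Icc (0:ℝ) T, |c x t| ≤ L1')
    (u0 : Euc N → ℝ) (hu0c : Continuous u0)
    (R0 : ℝ) (hu0supp : {x : Euc N | 0 ≤ u0 x} ⊆ closedBall 0 R0)
    (u : Euc N → ℝ → ℝ)
    (huc : ContinuousOn (fun p : Euc N × ℝ => u p.1 p.2)
      ((Set.univ : Set (Euc N)) ×ˢ Set.Icc (0 : ℝ) T))
    (husol : IsViscositySolution N T c u u0)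
    (xb : Euc N) (δ : ℝ) (hδ : 0 < δ) :
    ∃ γ > 0, ∀ tb ∈ Set.Ioo (0:ℝ) T, R0 + L1' * tb + δ ≤ ‖xb‖ → u xb tb ≤ -γ := by
  by_cases hxbn : R0 + δ ≤ ‖xb‖
  swap
  · refine ⟨1, one_pos, fun tb htb hle => absurd hle ?_⟩
    push_neg
    nlinarith [htb.1]
  -- the compact annulus containing all cone bases
  set A : Set (Euc N) := closedBall (0:Euc N) (‖xb‖ + (L1'*T + δ)) \ ball 0 (R0 + δ/2) with hA
  have hAcomp : IsCompact A := (isCompact_closedBall _ _).diff isOpen_ball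
  have hxbA : xb ∈ A := by
    constructor
    · simp only [mem_closedBall, dist_zero_right]
      nlinarith
    · simp only [mem_ball, dist_zero_right, not_lt]
      linarith
  obtain ⟨z, hzA, hz'⟩ := hAcomp.exists_isMaxOn ⟨xb, hxbA⟩ hu0c.continuousOn
  have hz : ∀ x ∈ A, u0 x ≤ u0 z := fun x hx => hz' hx
  have hzneg : u0 z < 0 := by
    by_contra h
    push_neg at h
    have := hu0supp h
    simp only [mem_closedBall, dist_zero_right] at this
    have := hzA.2
    simp only [mem_ball, dist_zero_right, not_lt] at this
    linarith
  set η : ℝ := -u0 z with hηdef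
  have hη : 0 < η := by simp [hηdef]; linarith
  have hu0A : ∀ x ∈ A, u0 x ≤ -η := fun x hx => by
    have := hz x hx; simp [hηdef]; linarith
  -- uniform bound M for u on a big compact cylinder
  set Qs : Set (Euc N × ℝ) := closedBall xb (L1'*T + δ) ×ˢ Icc (0:ℝ) T with hQs
  have hQscomp : IsCompact Qs := (isCompact_closedBall _ _).prod isCompact_Icc
  have hQsne : Qs.Nonempty := ⟨(xb, 0), by
    constructor
    · simp only [mem_closedBall, dist_self]; nlinarith
    · exact ⟨le_refl 0, hT.le⟩⟩
  have hQssub : Qs ⊆ (Set.univ : Set (Euc N)) ×ˢ Icc (0:ℝ) T := fun p hp => ⟨trivial, hp.2⟩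
  obtain ⟨pM, hpM, hM'⟩ := hQscomp.exists_isMaxOn hQsne (huc.mono hQssub)
  have hM : ∀ p ∈ Qs, u p.1 p.2 ≤ u pM.1 pM.2 := fun p hp => hM' hp
  set M : ℝ := u pM.1 pM.2 with hMdef
  clear_value A η M
  refine ⟨η/8, by linarith, fun tb htb hxb2 => ?_⟩
  by_contra hcon
  push_neg at hcon
  -- parameters of the barrier
  set ρ : ℝ := L1'*tb + δ/2 with hρ
  have hρpos : 0 < ρ := by rw [hρ]; nlinarith [htb.1, mul_pos hL1' htb.1]
  set ε : ℝ := δ/8 with hε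
  have hεpos : 0 < ε := by positivity
  set σ : ℝ := δ/(8*T) with hσ
  have hσpos : 0 < σ := by positivity
  set Kc : ℝ := L1' + σ with hKc
  have hKcpos : 0 < Kc := by positivity
  set s₁ : ℝ := ε + Kc*tb with hs₁
  set t₂ : ℝ := (tb+T)/2 with ht₂
  set B : ℝ := η/8 with hB
  have hBpos : 0 < B := by positivity
  set lam : ℝ := (4/δ) * Real.log (1 + (max M 0 + η)/B) with hlam
  set lam' : ℝ := (2/(T-tb)) * Real.log (1 + (max M 0 + η)/B) with hlam'
  have hlogpos : 0 < Real.log (1 + (max M 0 + η)/B) := by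
    apply Real.log_pos
    have : 0 < (max M 0 + η)/B := by positivity
    linarith
  have hlampos : 0 < lam := by
    apply mul_pos _ hlogpos; positivity
  have hTtb : 0 < T - tb := by linarith [htb.2]
  have hlam'pos : 0 < lam' := by
    apply mul_pos _ hlogpos; positivity
  have hlamval : B * Real.exp (lam * (δ/4)) = B + (max M 0 + η) := by
    have h1 : lam * (δ/4) = Real.log (1 + (max M 0 + η)/B) := by
      rw [hlam]; field_simp
    rw [h1, Real.exp_log (by positivity)]
    field_simp
  have hlam'val : B * Real.exp (lam' * (T - t₂)) = B + (max M 0 + η) := by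
    have h1 : lam' * (T - t₂) = Real.log (1 + (max M 0 + η)/B) := by
      rw [hlam', ht₂]; field_simp; ring
    rw [h1, Real.exp_log (by positivity)]
    field_simp
  -- the barrier (test function)
  set φ : Euc N → ℝ → ℝ := fun x t =>
    -(η/2) + B * Real.exp (lam * (Real.sqrt (‖x - xb‖^2 + ε^2) + Kc*t - s₁))
      + B * Real.exp (lam' * (t - t₂)) with hφdef
  have hsqpos : ∀ x : Euc N, (0:ℝ) < ‖x - xb‖^2 + ε^2 := fun x => by positivity
  -- smoothness of the barrier
  have h1 : ContDiff ℝ 1 (fun p : Euc N × ℝ => ‖p.1 - xb‖^2 + ε^2) :=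
    (ContDiff.norm_sq (𝕜 := ℝ) ((contDiff_fst (E := Euc N) (F := ℝ)).sub contDiff_const)).add
      contDiff_const
  have h2 : ContDiff ℝ 1 (fun p : Euc N × ℝ => Real.sqrt (‖p.1 - xb‖^2 + ε^2)) :=
    h1.sqrt (fun p => (hsqpos p.1).ne')
  have h3 : ContDiff ℝ 1
      (fun p : Euc N × ℝ => lam * (Real.sqrt (‖p.1 - xb‖^2 + ε^2) + Kc*p.2 - s₁)) :=
    contDiff_const.mul ((h2.add (contDiff_const.mul contDiff_snd)).sub contDiff_const)
  have h5 : ContDiff ℝ 1 (fun p : Euc N × ℝ => lam' * (p.2 - t₂)) :=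
    contDiff_const.mul ((contDiff_snd (E := Euc N) (F := ℝ)).sub contDiff_const)
  have hφsmooth : ContDiff ℝ 1 (fun p : Euc N × ℝ => φ p.1 p.2) := by
    simp only [hφdef]
    exact (contDiff_const.add (contDiff_const.mul h3.exp)).add (contDiff_const.mul h5.exp)
  clear_value ρ ε σ Kc s₁ t₂ B lam lam' φ
  -- the cone cylinder and the maximum point of u - φ on it
  set Q : Set (Euc N × ℝ) := closedBall xb ρ ×ˢ Icc (0:ℝ) T with hQdef
  have hQcomp : IsCompact Q := (isCompact_closedBall _ _).prod isCompact_Icc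
  have hxbtbQ : (xb, tb) ∈ Q := ⟨by simp [hρpos.le], ⟨htb.1.le, htb.2.le⟩⟩
  have hQsub : Q ⊆ (Set.univ : Set (Euc N)) ×ˢ Icc (0:ℝ) T := fun p hp => ⟨trivial, hp.2⟩
  have hρle : ρ ≤ L1'*T + δ := by
    rw [hρ]
    nlinarith [htb.2, htb.1]
  have hQQs : Q ⊆ Qs := fun p hp =>
    ⟨closedBall_subset_closedBall hρle hp.1, hp.2⟩
  have hφcont : Continuous (fun p : Euc N × ℝ => φ p.1 p.2) := hφsmooth.continuous
  obtain ⟨p0, hp0Q, hmax'⟩ := hQcomp.exists_isMaxOn ⟨(xb,tb), hxbtbQ⟩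
    (((huc.mono hQsub)).sub hφcont.continuousOn)
  obtain ⟨x0, t0⟩ := p0
  have hmax : ∀ p ∈ Q, u p.1 p.2 - φ p.1 p.2 ≤ u x0 t0 - φ x0 t0 := fun p hp => hmax' hp
  have hx0 : ‖x0 - xb‖ ≤ ρ := by
    have := hp0Q.1
    rwa [mem_closedBall, dist_eq_norm] at this
  have ht0 : t0 ∈ Icc (0:ℝ) T := hp0Q.2
  have hexp2pos : ∀ x : ℝ, (0:ℝ) < Real.exp x := fun x => Real.exp_pos x
  -- the value of the barrier at (xb, tb)
  have hφxbtb : φ xb tb ≤ -(η/4) := by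
    have e0 : ‖xb - xb‖^2 = (0:ℝ) := by simp
    have e1 : Real.sqrt (‖xb - xb‖^2 + ε^2) = ε := by
      rw [e0, zero_add, Real.sqrt_sq hεpos.le]
    have harg : lam * (Real.sqrt (‖xb - xb‖^2 + ε^2) + Kc*tb - s₁) = 0 := by
      rw [e1, hs₁]; ring
    have h2 : Real.exp (lam' * (tb - t₂)) ≤ 1 := by
      apply Real.exp_le_one_iff.mpr
      apply mul_nonpos_of_nonneg_of_nonpos hlam'pos.le
      rw [ht₂]; linarith [htb.2]
    have : φ xb tb = -(η/2) + B * Real.exp 0 + B * Real.exp (lam' * (tb - t₂)) := by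
      rw [hφdef]; simp only; rw [harg]
    rw [this, Real.exp_zero]
    have h3 : Real.exp (lam' * (tb - t₂)) ≤ 1 := h2
    have h4 : B * Real.exp (lam' * (tb - t₂)) ≤ B := by nlinarith [hexp2pos (lam' * (tb - t₂))]
    linarith
  have hm0 : 0 < u x0 t0 - φ x0 t0 := by
    have h1 := hmax (xb, tb) hxbtbQ
    simp only at h1
    linarith
  -- the max point cannot be on the base t = 0
  have ht0ne0 : t0 ≠ 0 := by
    intro h0
    have hx0A : x0 ∈ A := by
      rw [hA]
      constructor
      · rw [mem_closedBall, dist_zero_right]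
        calc ‖x0‖ = ‖(x0 - xb) + xb‖ := by rw [sub_add_cancel]
          _ ≤ ‖x0 - xb‖ + ‖xb‖ := norm_add_le _ _
          _ ≤ ‖xb‖ + (L1'*T + δ) := by linarith [hx0.trans hρle]
      · rw [mem_ball, dist_zero_right, not_lt]
        have h1 : ‖xb‖ - ‖x0‖ ≤ ‖x0 - xb‖ := by
          have := norm_sub_norm_le xb x0
          rwa [norm_sub_rev] at this
        have : ‖xb‖ ≥ R0 + ρ + δ/2 := by rw [hρ]; linarith
        linarith [hx0]
    have hu0x0 : u0 x0 ≤ -η := hu0A _ hx0A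
    have hux0 : u x0 t0 ≤ -η := by rw [h0, husol.1 x0]; exact hu0x0
    have hφx0 : -(η/2) ≤ φ x0 t0 := by
      rw [hφdef]; simp only
      nlinarith [hexp2pos (lam * (Real.sqrt (‖x0 - xb‖^2 + ε^2) + Kc*t0 - s₁)),
        hexp2pos (lam' * (t0 - t₂)), hBpos]
    linarith
  -- the max point cannot be on the top t = T
  have huM : u x0 t0 ≤ M := hM (x0, t0) (hQQs hp0Q)
  have hMmax : M ≤ max M 0 := le_max_left _ _
  have ht0neT : t0 ≠ T := by
    intro hTT
    have h2 : B * Real.exp (lam' * (t0 - t₂)) = B + (max M 0 + η) := by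
      rw [hTT]
      exact hlam'val
    have hφx0 : -(η/2) + (B + (max M 0 + η)) ≤ φ x0 t0 := by
      rw [hφdef]; simp only
      nlinarith [hexp2pos (lam * (Real.sqrt (‖x0 - xb‖^2 + ε^2) + Kc*t0 - s₁)), hBpos, h2.ge]
    linarith
  -- the max point cannot be on the lateral boundary
  have hσtb : σ * tb ≤ δ/8 := by
    rw [hσ]
    rw [div_mul_eq_mul_div, div_le_div_iff₀ (by positivity) (by norm_num)]
    nlinarith [htb.2.le, htb.1.le]
  have hx0lt : ‖x0 - xb‖ < ρ := by
    rcases lt_or_eq_of_le hx0 with h | h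
    · exact h
    · exfalso
      have hsq : ρ ≤ Real.sqrt (‖x0 - xb‖^2 + ε^2) := by
        rw [h]
        calc ρ = Real.sqrt (ρ^2) := (Real.sqrt_sq hρpos.le).symm
          _ ≤ _ := Real.sqrt_le_sqrt (by linarith [sq_nonneg ε])
      have harg : lam * (δ/4) ≤ lam * (Real.sqrt (‖x0 - xb‖^2 + ε^2) + Kc*t0 - s₁) := by
        apply mul_le_mul_of_nonneg_left _ hlampos.le
        have : Real.sqrt (‖x0 - xb‖^2 + ε^2) + Kc*t0 - s₁ ≥ ρ + 0 - s₁ := by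
          have := mul_nonneg hKcpos.le ht0.1
          linarith
        have : ρ - s₁ ≥ δ/4 := by
          rw [hρ, hs₁, hε, hKc]
          nlinarith [hσtb]
        linarith [mul_nonneg hKcpos.le ht0.1, hsq]
      have hE1big : B + (max M 0 + η) ≤ B * Real.exp (lam * (Real.sqrt (‖x0 - xb‖^2 + ε^2) + Kc*t0 - s₁)) := by
        rw [← hlamval]
        exact mul_le_mul_of_nonneg_left (Real.exp_le_exp.mpr harg) hBpos.le
      have hφx0 : -(η/2) + (B + (max M 0 + η)) ≤ φ x0 t0 := by
        rw [hφdef]; simp only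
        nlinarith [hexp2pos (lam' * (t0 - t₂)), hBpos]
      linarith
  have ht0pos : 0 < t0 := lt_of_le_of_ne ht0.1 (Ne.symm ht0ne0)
  have ht0T : t0 < T := lt_of_le_of_ne ht0.2 ht0neT
  -- the viscosity inequality at the interior maximum
  have hloc : IsLocalMaxOn (fun p : Euc N × ℝ => u p.1 p.2 - φ p.1 p.2)
      ((Set.univ : Set (Euc N)) ×ˢ Icc (0:ℝ) T) (x0, t0) := by
    have hrpos : 0 < ρ - ‖x0 - xb‖ := by linarith
    have hball : Metric.ball ((x0, t0) : Euc N × ℝ) (ρ - ‖x0 - xb‖) ∈ 𝓝 ((x0, t0) : Euc N × ℝ) :=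
      ball_mem_nhds _ hrpos
    have hmem := inter_mem_nhdsWithin ((Set.univ : Set (Euc N)) ×ˢ Icc (0:ℝ) T) hball
    apply Filter.eventually_of_mem hmem
    rintro ⟨y, s⟩ ⟨hy1, hy2⟩
    apply hmax
    constructor
    · rw [mem_closedBall, dist_eq_norm]
      have hd : dist y x0 < ρ - ‖x0 - xb‖ := by
        have := hy2
        rw [mem_ball, Prod.dist_eq] at this
        exact lt_of_le_of_lt (le_max_left _ _) this
      rw [dist_eq_norm] at hd
      calc ‖y - xb‖ = ‖(y - x0) + (x0 - xb)‖ := by abel_nf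
        _ ≤ ‖y - x0‖ + ‖x0 - xb‖ := norm_add_le _ _
        _ ≤ ρ := by linarith
    · exact hy1.2
  have hvisc := (husol.2 φ hφsmooth x0 t0 ⟨ht0pos, ht0T⟩).1 hloc
  -- notation for the values at the max point
  set g0 : ℝ := Real.sqrt (‖x0 - xb‖^2 + ε^2) with hg0
  set E1 : ℝ := Real.exp (lam * (g0 + Kc*t0 - s₁)) with hE1
  set E2 : ℝ := Real.exp (lam' * (t0 - t₂)) with hE2
  clear_value g0 E1 E2
  have hg0pos : 0 < g0 := by rw [hg0]; exact Real.sqrt_pos.mpr (hsqpos x0)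
  have hg0ge : ‖x0 - xb‖ ≤ g0 := by
    have h := Real.sqrt_le_sqrt (show ‖x0 - xb‖^2 ≤ ‖x0 - xb‖^2 + ε^2 by nlinarith [sq_nonneg ε])
    rw [Real.sqrt_sq (norm_nonneg _)] at h
    rw [hg0]
    exact h
  have hE1pos : 0 < E1 := by rw [hE1]; exact Real.exp_pos _
  have hE2pos : 0 < E2 := by rw [hE2]; exact Real.exp_pos _
  -- the time derivative of the barrier
  have hφx0fun : φ x0 = fun t : ℝ =>
      -(η/2) + B * Real.exp (lam * (g0 + Kc*t - s₁)) + B * Real.exp (lam' * (t - t₂)) := by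
    funext t
    rw [hφdef]
    beta_reduce
    rw [← hg0]
  have hderiv : HasDerivAt (φ x0) (B * (E1 * (lam * Kc)) + B * (E2 * lam')) t0 := by
    rw [hφx0fun]
    have ht1 : HasDerivAt (fun t : ℝ => lam * (g0 + Kc*t - s₁)) (lam * Kc) t0 := by
      have h2 := ((((hasDerivAt_id t0).const_mul Kc).const_add g0).sub_const s₁).const_mul lam
      simpa using h2
    have hth1 : HasDerivAt (fun t : ℝ => Real.exp (lam * (g0 + Kc*t - s₁))) (E1 * (lam * Kc)) t0 := by
      have h := ht1.exp
      rw [hE1]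
      exact h
    have ht3 : HasDerivAt (fun t : ℝ => lam' * (t - t₂)) lam' t0 := by
      have := ((hasDerivAt_id t0).sub_const t₂).const_mul lam'
      simpa using this
    have hth2 : HasDerivAt (fun t : ℝ => Real.exp (lam' * (t - t₂))) (E2 * lam') t0 := by
      have h := ht3.exp
      rw [hE2]
      exact h
    exact ((hth1.const_mul B).const_add (-(η/2))).add (hth2.const_mul B)
  -- the spatial gradient of the barrier
  have hco : (0:ℝ) < B * E1 * lam / g0 :=
    div_pos (mul_pos (mul_pos hBpos hE1pos) hlampos) hg0pos
  have hφt0fun : (fun x => φ x t0) = (fun x : Euc N =>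
      -(η/2) + B * Real.exp (lam * (Real.sqrt (‖x - xb‖^2 + ε^2) + Kc*t0 - s₁))
        + B * Real.exp (lam' * (t0 - t₂))) := by
    funext x
    rw [hφdef]
  have hgrad : HasGradientAt (fun x => φ x t0) ((B * E1 * lam / g0) • (x0 - xb)) x0 := by
    rw [hφt0fun]
    have h := barrier_hasGradient xb ε lam Kc s₁ B (B * Real.exp (lam' * (t0 - t₂)))
      (-(η/2)) t0 hεpos x0
    rw [← hg0, ← hE1] at h
    exact h
  have hgradnorm : ‖gradient (fun x => φ x t0) x0‖ = (B * E1 * lam / g0) * ‖x0 - xb‖ := by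
    rw [hgrad.gradient, norm_smul, Real.norm_eq_abs, abs_of_pos hco]
  rw [hderiv.deriv, hgradnorm] at hvisc
  -- deriving the contradiction
  have hcL : c x0 t0 ≤ L1' := (le_abs_self _).trans (hH1b x0 t0 ⟨ht0.1, ht0.2⟩)
  have hfac : 0 ≤ (B * E1 * lam / g0) * ‖x0 - xb‖ := mul_nonneg hco.le (norm_nonneg _)
  have h9 : c x0 t0 * ((B * E1 * lam / g0) * ‖x0 - xb‖) ≤ L1' * (B * E1 * lam) := by
    have h91 : c x0 t0 * ((B * E1 * lam / g0) * ‖x0 - xb‖)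
        ≤ L1' * ((B * E1 * lam / g0) * ‖x0 - xb‖) := mul_le_mul_of_nonneg_right hcL hfac
    have h92 : (B * E1 * lam / g0) * ‖x0 - xb‖ ≤ B * E1 * lam := by
      rw [div_mul_eq_mul_div, div_le_iff₀ hg0pos]
      have := mul_le_mul_of_nonneg_left hg0ge (mul_pos (mul_pos hBpos hE1pos) hlampos).le
      linarith
    exact h91.trans (mul_le_mul_of_nonneg_left h92 hL1'.le)
  have h10 : L1' * (B * E1 * lam) < B * (E1 * (lam * Kc)) + B * (E2 * lam') := by
    have hpos1 : 0 < B * E1 * lam * σ :=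
      mul_pos (mul_pos (mul_pos hBpos hE1pos) hlampos) hσpos
    have hpos2 : 0 < B * (E2 * lam') := mul_pos hBpos (mul_pos hE2pos hlam'pos)
    have hexpand : B * (E1 * (lam * Kc)) = L1' * (B * E1 * lam) + B * E1 * lam * σ := by
      rw [hKc]; ring
    linarith
  linarith

/-- finite speed of propagation — bound on the size of the front. -/
theorem stmt5 (N : ℕ) (hN : 1 ≤ N) (T : ℝ) (hT : 0 < T)
    (c : Euc N → ℝ → ℝ)
    (hc : ContinuousOn (fun p : Euc N × ℝ => c p.1 p.2)
      ((Set.univ : Set (Euc N)) ×ˢ Set.Icc (0 : ℝ) T))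
    (L1 L1' : ℝ) (hL1 : 0 < L1) (hL1' : 0 < L1')
    (hH1 : ∀ x y : Euc N, ∀ t ∈ Set.Icc (0 : ℝ) T,
      |c x t - c y t| ≤ L1 * ‖x - y‖ ∧ |c x t| ≤ L1')
    (u0 : Euc N → ℝ) (K : ℝ≥0) (hu0 : LipschitzWith K u0)
    (R0 : ℝ) (hR0 : 0 < R0) (hu0supp : {x : Euc N | 0 ≤ u0 x} ⊆ closedBall 0 R0)
    (u : Euc N → ℝ → ℝ)
    (huc : ContinuousOn (fun p : Euc N × ℝ => u p.1 p.2)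
      ((Set.univ : Set (Euc N)) ×ˢ Set.Icc (0 : ℝ) T))
    (husol : IsViscositySolution N T c u u0) :
    ∀ t ∈ Set.Icc (0 : ℝ) T, {x : Euc N | 0 ≤ u x t} ⊆ closedBall 0 (R0 + L1' * t) := by
  intro t ht x hx
  simp only [Set.mem_setOf_eq] at hx
  have hH1b : ∀ y : Euc N, ∀ s ∈ Set.Icc (0:ℝ) T, |c y s| ≤ L1' :=
    fun y s hs => (hH1 y y s hs).2
  rcases eq_or_lt_of_le ht.1 with h0 | h0
  · -- t = 0
    subst h0
    have h1 : 0 ≤ u0 x := by rwa [husol.1 x] at hx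
    have h2 := hu0supp h1
    simp only [mem_closedBall, dist_zero_right] at h2 ⊢
    nlinarith
  by_contra hout
  simp only [mem_closedBall, dist_zero_right, not_le] at hout
  rcases lt_or_eq_of_le ht.2 with hlt | heq
  · -- 0 < t < T
    obtain ⟨γ, hγ, hk⟩ := keyBarrier N T hT c L1' hL1' hH1b u0 hu0.continuous R0 hu0supp
      u huc husol x (‖x‖ - (R0 + L1' * t)) (by linarith)
    have := hk t ⟨h0, hlt⟩ (by linarith)
    linarith
  · -- t = T
    subst heq
    obtain ⟨γ, hγ, hk⟩ := keyBarrier N t hT c L1' hL1' hH1b u0 hu0.continuous R0 hu0supp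
      u huc husol x (‖x‖ - (R0 + L1' * t)) (by linarith)
    have hbound : ∀ s ∈ Set.Ioo (0:ℝ) t, u x s ≤ -γ := fun s hs => by
      apply hk s hs
      have : L1' * s ≤ L1' * t := mul_le_mul_of_nonneg_left hs.2.le hL1'.le
      linarith
    have hconsT : ContinuousWithinAt (fun s => u x s) (Set.Ioo (0:ℝ) t) t := by
      have h1 : ContinuousWithinAt (fun p : Euc N × ℝ => u p.1 p.2)
          ((Set.univ : Set (Euc N)) ×ˢ Set.Icc (0:ℝ) t) (x, t) :=
        huc (x, t) ⟨trivial, ⟨hT.le, le_refl t⟩⟩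
      have hg : Continuous fun s : ℝ => ((x, s) : Euc N × ℝ) :=
        continuous_const.prodMk continuous_id
      exact h1.comp hg.continuousWithinAt
        (fun s hs => ⟨trivial, ⟨hs.1.le, hs.2.le⟩⟩)
    have hne : (𝓝[Set.Ioo (0:ℝ) t] t).NeBot := by
      apply mem_closure_iff_nhdsWithin_neBot.mp
      rw [closure_Ioo hT.ne]
      exact ⟨hT.le, le_refl t⟩
    have hlim : Tendsto (fun s => u x s) (𝓝[Set.Ioo (0:ℝ) t] t) (𝓝 (u x t)) :=
      hconsT.tendsto
    have hfin : u x t ≤ -γ :=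
      le_of_tendsto hlim (eventually_mem_nhdsWithin.mono (fun s hs => hbound s hs))
    linarith
end
end

section
/- Let N ≥ 1, let v : ℝ^N → ℝ be semiconvex with constant C > 0, let η0 > 0 be such that |v(x)| + |p| ≥ η0 for every x ∈ ℝ^N and every p ∈ D⁺v(x), and let E ⊆ ℝ^N be a closed set such that the interior of E equals {x : v(x) > 0} and the boundary of E equals {x : v(x) = 0}. Then E satisfies the interior ball property of radius η0/C. -/
open Set MeasureTheory Filter Metric
open scoped Topology ENNReal NNReal RealInnerProductSpace symmDiff

noncomputable section

lemma dyadicGen {N : ℕ} (f : Euc N → ℝ) (D : ℝ)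
    (hf : ∀ x h : Euc N, f (x + h) - 2 * f x + f (x - h) ≥ -D * ‖h‖ ^ 2) :
    ∀ (k : ℕ) (x y : Euc N), f (x + ((2:ℝ)⁻¹)^k • (y - x)) ≤
      (1 - ((2:ℝ)⁻¹)^k) * f x + ((2:ℝ)⁻¹)^k * f y
        + (D/2) * (((2:ℝ)⁻¹)^k * (1 - ((2:ℝ)⁻¹)^k)) * ‖y - x‖^2 := by
  intro k
  induction k with
  | zero => intro x y; simp
  | succ k ih =>
    intro x y
    set t : ℝ := ((2:ℝ)⁻¹)^k with ht
    have ht0 : 0 < t := by positivity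
    have hmid := hf (x + (t/2) • (y - x)) ((t/2) • (y - x))
    have e1 : x + (t/2) • (y - x) + (t/2) • (y - x) = x + t • (y - x) := by
      module
    have e2 : x + (t/2) • (y - x) - (t/2) • (y - x) = x := by module
    have e3 : ((2:ℝ)⁻¹)^(k+1) = t/2 := by rw [pow_succ]; ring
    have hn : ‖(t/2) • (y - x)‖^2 = (t/2)^2 * ‖y - x‖^2 := by
      rw [norm_smul]; rw [Real.norm_eq_abs, abs_of_pos (by positivity)]; ring
    rw [e1, e2, hn] at hmid
    have hb := ih x y
    rw [e3]
    have hs : (0:ℝ) ≤ ‖y - x‖^2 := by positivity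
    nlinarith [hmid, hb]

lemma supdiff_global {N : ℕ} {v : Euc N → ℝ} {C : ℝ} (hC : 0 < C)
    (hsc : Semiconvex C v) {x1 p : Euc N} (hp : p ∈ SuperDiff v x1) (y : Euc N) :
    v x1 + ⟪p, y - x1⟫ - (C/2) * ‖y - x1‖^2 ≤ v y := by
  rcases eq_or_ne y x1 with rfl | hne
  · simp
  set A : ℝ := ‖y - x1‖ with hA
  have hA0 : 0 < A := by
    rw [hA, norm_pos_iff, sub_ne_zero]; exact hne
  -- it suffices to show the bound up to ε*(A+1) for every ε > 0
  by_contra hcon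
  push_neg at hcon
  set δ : ℝ := (v x1 + ⟪p, y - x1⟫ - (C/2) * A^2) - v y with hδ
  have hδ0 : 0 < δ := by simp only [hδ]; linarith
  set ε : ℝ := δ / (2 * (A + 1)) with hε
  have hε0 : 0 < ε := by positivity
  -- eventual facts in k
  have hev1 : ∀ᶠ k : ℕ in atTop,
      (v (x1 - ((2:ℝ)⁻¹)^k • (y - x1)) - v x1
        - ⟪p, (x1 - ((2:ℝ)⁻¹)^k • (y - x1)) - x1⟫) / ‖(x1 - ((2:ℝ)⁻¹)^k • (y - x1)) - x1‖ ≤ ε := by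
    have hseq : Tendsto (fun k : ℕ => x1 - ((2:ℝ)⁻¹)^k • (y - x1)) atTop (𝓝[≠] x1) := by
      apply tendsto_nhdsWithin_of_tendsto_nhds_of_eventually_within
      · have h2 : Tendsto (fun k : ℕ => ((2:ℝ)⁻¹)^k) atTop (𝓝 0) :=
          tendsto_pow_atTop_nhds_zero_of_lt_one (by norm_num) (by norm_num)
        have := (h2.smul_const (y - x1)).const_sub x1
        simpa using this
      · refine Eventually.of_forall fun k => ?_
        simp only [mem_compl_iff, mem_singleton_iff, sub_eq_self]
        intro h
        rcases smul_eq_zero.1 h with h | h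
        · exact absurd h (by positivity)
        · exact hne (by rwa [sub_eq_zero] at h)
    exact hseq.eventually (hp ε hε0)
  have hev2 : ∀ᶠ k : ℕ in atTop, (C/2) * ((2:ℝ)⁻¹)^k * A^2 ≤ ε := by
    have h2 : Tendsto (fun k : ℕ => (C/2) * ((2:ℝ)⁻¹)^k * A^2) atTop (𝓝 0) := by
      have := (tendsto_pow_atTop_nhds_zero_of_lt_one (r := (2:ℝ)⁻¹) (by norm_num) (by norm_num))
      have := (this.const_mul (C/2)).mul_const (A^2)
      simpa using this
    exact h2.eventually_le_const hε0
  obtain ⟨k, hk1, hk2⟩ := (hev1.and hev2).exists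
  set t : ℝ := ((2:ℝ)⁻¹)^k with htdef
  have ht0 : 0 < t := by positivity
  have e : (x1 - t • (y - x1)) - x1 = -(t • (y - x1)) := by module
  have hnorm : ‖(x1 - t • (y - x1)) - x1‖ = t * A := by
    rw [e, norm_neg, norm_smul, Real.norm_eq_abs, abs_of_pos ht0, hA]
  have hip : ⟪p, (x1 - t • (y - x1)) - x1⟫ = -(t * ⟪p, y - x1⟫) := by
    rw [e, inner_neg_right, real_inner_smul_right]
  rw [hnorm, hip, div_le_iff₀ (by positivity)] at hk1
  have hu : v (x1 - t • (y - x1)) - v x1 + t * ⟪p, y - x1⟫ ≤ ε * (t * A) := by linarith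
  have hsc' := hsc x1 (t • (y - x1))
  have hns : ‖t • (y - x1)‖ ^ 2 = t^2 * A^2 := by
    rw [norm_smul, Real.norm_eq_abs, abs_of_pos ht0, hA]; ring
  rw [hns] at hsc'
  have dy := dyadicGen v C hsc k x1 y
  rw [← htdef, ← hA] at dy
  have h5 : t * ((C/2) * t * A^2) ≤ t * ε := mul_le_mul_of_nonneg_left hk2 ht0.le
  have h7 : t * δ = t * v x1 + t * ⟪p, y - x1⟫ - (C/2) * (t * A^2) - t * v y := by
    rw [hδ]; ring
  have h8 : ε * (t * A) + t * ε = t * δ / 2 := by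
    rw [hε]; field_simp
  have h9 : 0 < t * δ := mul_pos ht0 hδ0
  nlinarith [hu, hsc', dy, h5, h7, h8, h9]

/-- Spreading of upper bounds for midpoint convex functions. -/
lemma spread_bound {N : ℕ} {g : Euc N → ℝ}
    (hmid : ∀ x h : Euc N, 2 * g x ≤ g (x + h) + g (x - h))
    {z1 : Euc N} {δ M0 : ℝ} (hδ : 0 < δ) (hM0 : ∀ u ∈ ball z1 δ, g u ≤ M0)
    (y : Euc N) : ∀ u ∈ closedBall y (δ/4), g u ≤ (g (y + (y - z1)) + M0)/2 := by
  intro u hu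
  have h1 := hmid u ((y + (y - z1)) - u)
  have e1 : u + ((y + (y - z1)) - u) = y + (y - z1) := by module
  have e2 : u - ((y + (y - z1)) - u) = z1 + (2:ℝ) • (u - y) := by module
  rw [e1, e2] at h1
  have hc : z1 + (2:ℝ) • (u - y) ∈ ball z1 δ := by
    rw [mem_ball_iff_norm, add_sub_cancel_left, norm_smul, Real.norm_eq_abs]
    have := mem_closedBall_iff_norm.1 hu
    rw [show |(2:ℝ)| = 2 by norm_num]
    linarith
  have h2 := hM0 _ hc
  linarith

/-- Continuity at a point for midpoint convex functions bounded above near the point. -/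
lemma contAt_of_bounded {N : ℕ} {g : Euc N → ℝ}
    (hmid : ∀ x h : Euc N, 2 * g x ≤ g (x + h) + g (x - h))
    (hdy : ∀ (k : ℕ) (x y : Euc N), g (x + ((2:ℝ)⁻¹)^k • (y - x)) ≤
      (1 - ((2:ℝ)⁻¹)^k) * g x + ((2:ℝ)⁻¹)^k * g y)
    {y : Euc N} {ρ K : ℝ} (hρ : 0 < ρ)
    (hbd : ∀ u ∈ closedBall y ρ, g u ≤ K) : ContinuousAt g y := by
  have hKy : g y ≤ K := hbd y (mem_closedBall_self hρ.le)
  rw [Metric.continuousAt_iff]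
  intro ε hε
  have hK1 : (0:ℝ) < K - g y + 1 := by linarith
  obtain ⟨k, hk⟩ := exists_pow_lt_of_lt_one (div_pos hε hK1) (show (2:ℝ)⁻¹ < 1 by norm_num)
  have ht0 : (0:ℝ) < ((2:ℝ)⁻¹)^k := by positivity
  have htK : ((2:ℝ)⁻¹)^k * (K - g y) < ε := by
    rw [lt_div_iff₀ hK1] at hk
    nlinarith
  refine ⟨((2:ℝ)⁻¹)^k * ρ, by positivity, ?_⟩
  intro u hu
  have upper : ∀ u' : Euc N, dist u' y < ((2:ℝ)⁻¹)^k * ρ →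
      g u' ≤ g y + ((2:ℝ)⁻¹)^k * (K - g y) := by
    intro u' hu'
    have hb : y + (((2:ℝ)⁻¹)^k)⁻¹ • (u' - y) ∈ closedBall y ρ := by
      rw [mem_closedBall_iff_norm, add_sub_cancel_left, norm_smul,
        Real.norm_eq_abs, abs_of_pos (by positivity)]
      rw [dist_eq_norm] at hu'
      rw [inv_mul_le_iff₀ ht0]
      linarith
    have e3 : y + ((2:ℝ)⁻¹)^k • ((y + (((2:ℝ)⁻¹)^k)⁻¹ • (u' - y)) - y) = u' := by
      rw [add_sub_cancel_left, smul_smul, mul_inv_cancel₀ ht0.ne', one_smul]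
      module
    have hwdy := hdy k y (y + (((2:ℝ)⁻¹)^k)⁻¹ • (u' - y))
    rw [e3] at hwdy
    have hwb := hbd _ hb
    nlinarith
  have hlow := hmid y (u - y)
  have e4 : y + (u - y) = u := by module
  rw [e4] at hlow
  have hyuy : dist (y - (u - y)) y < ((2:ℝ)⁻¹)^k * ρ := by
    rw [dist_eq_norm] at hu ⊢
    rw [show y - (u - y) - y = -(u - y) by module, norm_neg]
    exact hu
  have h5 := upper (y - (u - y)) hyuy
  have h6 := upper u hu
  rw [Real.dist_eq, abs_lt]
  constructor <;> nlinarith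

lemma cont_of_neg_ball {N : ℕ} {v : Euc N → ℝ} {C : ℝ} (hC : 0 < C)
    (hsc : Semiconvex C v) {z1 : Euc N} {δ : ℝ} (hδ : 0 < δ)
    (hneg : ∀ u ∈ ball z1 δ, v u < 0) : Continuous v := by
  have hw : ∀ x h : Euc N, (fun x => v x + (C/2) * ‖x‖^2) (x + h)
      - 2 * (fun x => v x + (C/2) * ‖x‖^2) x
      + (fun x => v x + (C/2) * ‖x‖^2) (x - h) ≥ -(0:ℝ) * ‖h‖ ^ 2 := by
    intro x h
    have h1 := hsc x h
    have e1 : ‖x + h‖^2 = ‖x‖^2 + 2 * ⟪x, h⟫ + ‖h‖^2 := norm_add_sq_real x h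
    have e2 : ‖x - h‖^2 = ‖x‖^2 - 2 * ⟪x, h⟫ + ‖h‖^2 := norm_sub_sq_real x h
    simp only
    rw [e1, e2]
    nlinarith [h1]
  have hmid : ∀ x h : Euc N, 2 * (fun x => v x + (C/2) * ‖x‖^2) x ≤
      (fun x => v x + (C/2) * ‖x‖^2) (x + h) + (fun x => v x + (C/2) * ‖x‖^2) (x - h) := by
    intro x h
    have := hw x h
    simp only at this ⊢
    linarith
  have hdy : ∀ (k : ℕ) (x y : Euc N),
      (fun x => v x + (C/2) * ‖x‖^2) (x + ((2:ℝ)⁻¹)^k • (y - x)) ≤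
      (1 - ((2:ℝ)⁻¹)^k) * (fun x => v x + (C/2) * ‖x‖^2) x
        + ((2:ℝ)⁻¹)^k * (fun x => v x + (C/2) * ‖x‖^2) y := by
    intro k x y
    have := dyadicGen (fun x => v x + (C/2) * ‖x‖^2) 0 hw k x y
    simp only at this ⊢
    linarith [this]
  have hM0 : ∀ u ∈ ball z1 δ, (fun x => v x + (C/2) * ‖x‖^2) u ≤ (C/2) * (‖z1‖ + δ)^2 := by
    intro u hu
    have h1 : v u < 0 := hneg u hu
    have h2 : ‖u‖ ≤ ‖z1‖ + δ := by
      have := mem_ball_iff_norm.1 hu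
      calc ‖u‖ = ‖z1 + (u - z1)‖ := by rw [add_sub_cancel]
        _ ≤ ‖z1‖ + ‖u - z1‖ := norm_add_le _ _
        _ ≤ ‖z1‖ + δ := by linarith
    have h3 : (0:ℝ) ≤ ‖u‖ := norm_nonneg _
    have h4 : ‖u‖^2 ≤ (‖z1‖ + δ)^2 := by nlinarith
    have h5 : (C/2) * ‖u‖^2 ≤ (C/2) * (‖z1‖ + δ)^2 :=
      mul_le_mul_of_nonneg_left h4 (by positivity)
    simp only
    linarith
  have hwc : Continuous (fun x : Euc N => v x + (C/2) * ‖x‖^2) := by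
    rw [continuous_iff_continuousAt]
    intro y
    exact contAt_of_bounded hmid hdy (by positivity : (0:ℝ) < δ/4)
      (spread_bound hmid hδ hM0 y)
  have : Continuous (fun x : Euc N => (v x + (C/2) * ‖x‖^2) - (C/2) * ‖x‖^2) :=
    hwc.sub (continuous_const.mul (continuous_norm.pow 2))
  convert this using 1
  funext x
  ring

lemma exists_superdiff_near {N : ℕ} {v : Euc N → ℝ} (hv : Continuous v)
    {U : Set (Euc N)} (hU : IsOpen U) {z : Euc N} (hz : z ∈ U)
    (hUneg : ∀ u ∈ U, v u < 0) :
    ∃ x1 ∈ U, ∃ p : Euc N, p ∈ SuperDiff v x1 := by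
  obtain ⟨ρ0, hρ0, hball⟩ := Metric.isOpen_iff.1 hU z hz
  set ρ : ℝ := ρ0/2 with hρdef
  have hρ : 0 < ρ := by positivity
  have hsub : closedBall z ρ ⊆ U :=
    (closedBall_subset_ball (by simp only [hρdef]; linarith)).trans hball
  have hvz : v z < 0 := hUneg z hz
  set K : ℝ := 2 * (-(v z)) / ρ^2 with hKdef
  have hK : 0 < K := by
    apply div_pos (by linarith) (by positivity)
  have hg : Continuous (fun u : Euc N => v u - K * ‖u - z‖^2) := by
    exact hv.sub (continuous_const.mul (((continuous_id.sub continuous_const).norm).pow 2))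
  obtain ⟨x1, hx1mem, hmax⟩ := (isCompact_closedBall z ρ).exists_isMaxOn
    ⟨z, mem_closedBall_self hρ.le⟩ hg.continuousOn
  have hx1U : x1 ∈ U := hsub hx1mem
  have hvx1 : v x1 < 0 := hUneg x1 hx1U
  have hgz := hmax (mem_closedBall_self hρ.le)
  simp only [Set.mem_setOf_eq, sub_self, norm_zero] at hgz
  norm_num at hgz
  -- hgz : v z ≤ v x1 - K * ‖x1 - z‖ ^ 2
  have hKn : K * ‖x1 - z‖^2 ≤ -(v z) := by nlinarith
  have hx1z : ‖x1 - z‖ < ρ := by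
    have h1 : K * ρ^2 = 2 * (-(v z)) := by
      rw [hKdef]; field_simp
    by_contra hcon
    push_neg at hcon
    have h2 : ρ^2 ≤ ‖x1 - z‖^2 := by nlinarith
    have h3 := mul_le_mul_of_nonneg_left h2 hK.le
    linarith
  refine ⟨x1, hx1U, (2*K) • (x1 - z), ?_⟩
  intro ε hε
  set m : ℝ := min (ρ - ‖x1 - z‖) (ε/(K+1)) with hmdef
  have hm : 0 < m := lt_min (by linarith) (by positivity)
  have h1 : ∀ᶠ u in 𝓝[≠] x1, u ∈ ball x1 m :=
    mem_nhdsWithin_of_mem_nhds (Metric.ball_mem_nhds _ hm)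
  have h2 : ∀ᶠ u in (𝓝[≠] x1 : Filter (Euc N)), u ≠ x1 := by
    filter_upwards [self_mem_nhdsWithin] with u hu
    exact hu
  filter_upwards [h1, h2] with u hu hne
  have huz : u ∈ closedBall z ρ := by
    rw [mem_closedBall_iff_norm]
    rw [mem_ball_iff_norm] at hu
    calc ‖u - z‖ = ‖(u - x1) + (x1 - z)‖ := by rw [sub_add_sub_cancel]
      _ ≤ ‖u - x1‖ + ‖x1 - z‖ := norm_add_le _ _
      _ ≤ ρ := by
          have : ‖u - x1‖ < ρ - ‖x1 - z‖ := lt_of_lt_of_le hu (min_le_left _ _)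
          linarith
  have hmx := hmax huz
  simp only [Set.mem_setOf_eq] at hmx
  -- expand ‖u - z‖^2
  have hexp : ‖u - z‖^2 = ‖x1 - z‖^2 + 2 * ⟪x1 - z, u - x1⟫ + ‖u - x1‖^2 := by
    rw [show u - z = (x1 - z) + (u - x1) by module]
    exact norm_add_sq_real _ _
  have hip : ⟪(2*K) • (x1 - z), u - x1⟫ = 2 * K * ⟪x1 - z, u - x1⟫ :=
    real_inner_smul_left _ _ _
  have hexp' : K * ‖u - z‖^2 = K * ‖x1 - z‖^2 + 2*K*⟪x1 - z, u - x1⟫ + K*‖u - x1‖^2 := by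
    rw [hexp]; ring
  have hnum : v u - v x1 - ⟪(2*K) • (x1 - z), u - x1⟫ ≤ K * ‖u - x1‖^2 := by
    rw [hip]
    linarith [hmx, hexp']
  have hnu : 0 < ‖u - x1‖ := by
    rw [norm_pos_iff, sub_ne_zero]; exact hne
  rw [div_le_iff₀ hnu]
  have hsmall : ‖u - x1‖ ≤ ε / (K+1) := by
    rw [mem_ball_iff_norm] at hu
    exact le_of_lt (lt_of_lt_of_le hu (min_le_right _ _))
  have h3 : K * ‖u - x1‖ ≤ ε := by
    rw [le_div_iff₀ (by positivity : (0:ℝ) < K+1)] at hsmall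
    nlinarith
  have h4 : K * ‖u - x1‖^2 ≤ ε * ‖u - x1‖ := by
    nlinarith [mul_le_mul_of_nonneg_right h3 hnu.le]
  linarith

lemma ball_inner_est {N : ℕ} {C t : ℝ} (hC : 0 < C) (ht0 : 0 < t)
    {p d : Euc N} (hP0 : 0 < ‖p‖) (htp : C * t ≤ ‖p‖)
    (hd : ‖d - t • (‖p‖⁻¹ • p)‖ ≤ t) : (C/2) * ‖d‖^2 ≤ ⟪p, d⟫ := by
  have hQn : ‖t • (‖p‖⁻¹ • p)‖ = t := by
    rw [norm_smul, norm_smul, norm_inv, norm_norm, Real.norm_eq_abs, abs_of_pos ht0,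
      inv_mul_cancel₀ hP0.ne', mul_one]
  have hexp : ‖d - t • (‖p‖⁻¹ • p)‖^2
      = ‖d‖^2 - 2*(t*(‖p‖⁻¹*⟪d, p⟫)) + t^2 := by
    rw [norm_sub_sq_real, real_inner_smul_right, real_inner_smul_right, hQn]
  have hsq : ‖d - t • (‖p‖⁻¹ • p)‖^2 ≤ t^2 := pow_le_pow_left₀ (norm_nonneg _) hd 2
  have hip2 : ‖d‖^2 ≤ 2*(t*(‖p‖⁻¹ * ⟪d, p⟫)) := by linarith [hsq, hexp]
  have hs0 : 0 ≤ ‖p‖⁻¹ * ⟪d, p⟫ := by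
    nlinarith [hip2, sq_nonneg ‖d‖, ht0]
  have heq : ‖p‖ * (‖p‖⁻¹ * ⟪d, p⟫) = ⟪d, p⟫ := by
    rw [← mul_assoc, mul_inv_cancel₀ hP0.ne', one_mul]
  have hcomm : ⟪p, d⟫ = ⟪d, p⟫ := real_inner_comm _ _
  nlinarith [mul_le_mul_of_nonneg_left hip2 (le_of_lt hC),
    mul_le_mul_of_nonneg_right htp hs0, heq, hcomm]

set_option maxHeartbeats 2000000 in
/-- a set represented by a semiconvex function with a lower-bound gradient
estimate satisfies the interior ball property of radius η0/C. -/
theorem stmt15 (N : ℕ) (hN : 1 ≤ N)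
    (v : Euc N → ℝ) (C : ℝ) (hC : 0 < C) (hsc : Semiconvex C v)
    (η0 : ℝ) (hη0 : 0 < η0)
    (hH3 : ∀ x : Euc N, ∀ p ∈ SuperDiff v x, η0 ≤ |v x| + ‖p‖)
    (E : Set (Euc N)) (hE : IsClosed E)
    (hint : interior E = {x : Euc N | 0 < v x})
    (hfr : frontier E = {x : Euc N | v x = 0}) :
    ∀ x ∈ frontier E, ∃ p : Euc N, ‖p‖ = 1 ∧
      closedBall (x - (η0 / C) • p) (η0 / C) ⊆ E := by
  intro x0 hx0
  have hvx0 : v x0 = 0 := by rw [hfr] at hx0; exact hx0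
  -- E = {x | 0 ≤ v x}
  have hEeq : E = {x : Euc N | 0 ≤ v x} := by
    ext x
    constructor
    · intro hx
      have h1 : x ∈ closure E := subset_closure hx
      rw [closure_eq_interior_union_frontier] at h1
      rcases h1 with h1 | h1
      · rw [hint] at h1
        exact le_of_lt (show (0:ℝ) < v x from h1)
      · rw [hfr] at h1
        exact ge_of_eq (show v x = 0 from h1)
    · intro hx
      have hx' : (0:ℝ) ≤ v x := hx
      rcases eq_or_lt_of_le hx' with h1 | h1
      · have : x ∈ frontier E := by rw [hfr]; exact h1.symm
        have h2 : x ∈ closure E := frontier_subset_closure this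
        rwa [hE.closure_eq] at h2
      · have : x ∈ interior E := by rw [hint]; exact h1
        exact interior_subset this
  have hcompl : ∀ u : Euc N, u ∉ E → v u < 0 := by
    intro u hu
    by_contra h
    push_neg at h
    exact hu (by rw [hEeq]; exact h)
  have hclosc : x0 ∈ closure Eᶜ := by
    rw [frontier_eq_closure_inter_closure] at hx0
    exact hx0.2
  have hEc_open : IsOpen Eᶜ := hE.isOpen_compl
  -- a ball where v < 0, giving continuity
  obtain ⟨z1, hz1⟩ : (Eᶜ).Nonempty := by
    rcases eq_empty_or_nonempty (Eᶜ) with h | h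
    · rw [h, closure_empty] at hclosc
      exact absurd hclosc (notMem_empty _)
    · exact h
  obtain ⟨δ, hδ, hball⟩ := Metric.isOpen_iff.1 hEc_open z1 hz1
  have hv : Continuous v :=
    cont_of_neg_ball hC hsc hδ (fun u hu => hcompl u (hball hu))
  -- sequence of superdifferential points approaching x0 from outside E
  have H : ∀ n : ℕ, ∃ x1 p : Euc N,
      dist x1 x0 < 1/((n:ℝ)+1) ∧ x1 ∉ E ∧ p ∈ SuperDiff v x1 := by
    intro n
    have hpos : (0:ℝ) < 1/((n:ℝ)+1) := by positivity
    obtain ⟨z, hz_mem⟩ := mem_closure_iff.1 hclosc (ball x0 (1/((n:ℝ)+1)))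
      isOpen_ball (mem_ball_self hpos)
    have hzE : z ∈ Eᶜ ∩ ball x0 (1/((n:ℝ)+1)) := ⟨hz_mem.2, hz_mem.1⟩
    obtain ⟨x1, hx1U, p, hp⟩ := exists_superdiff_near hv
      (hEc_open.inter isOpen_ball) hzE
      (fun u hu => hcompl u hu.1)
    exact ⟨x1, p, mem_ball.1 hx1U.2, hx1U.1, hp⟩
  choose xs ps hdist hnotE hsd using H
  have hvneg : ∀ n, v (xs n) < 0 := fun n => hcompl _ (hnotE n)
  have hxs_to : Tendsto xs atTop (𝓝 x0) := by
    rw [tendsto_iff_dist_tendsto_zero]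
    exact squeeze_zero (fun n => dist_nonneg) (fun n => (hdist n).le)
      tendsto_one_div_add_atTop_nhds_zero_nat
  have hvxs : Tendsto (fun n => v (xs n)) atTop (𝓝 0) := by
    have := (hv.continuousAt (x := x0)).tendsto.comp hxs_to
    rwa [hvx0] at this
  have hps_low : ∀ n, η0 + v (xs n) ≤ ‖ps n‖ := by
    intro n
    have h1 := hH3 (xs n) (ps n) (hsd n)
    rw [abs_of_neg (hvneg n)] at h1
    linarith
  have hglob : ∀ n (y : Euc N),
      v (xs n) + ⟪ps n, y - xs n⟫ - (C/2) * ‖y - xs n‖^2 ≤ v y :=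
    fun n => supdiff_global hC hsc (hsd n)
  -- tail where ‖ps n‖ is bounded below
  obtain ⟨N0, hN0⟩ := eventually_atTop.1
    (hvxs.eventually (eventually_gt_nhds (show -(η0/2) < 0 by linarith)))
  have hpn0 : ∀ n, N0 ≤ n → η0/2 ≤ ‖ps n‖ := by
    intro n hn
    have := hN0 n hn
    have := hps_low n
    linarith
  -- normalized directions and compactness of the sphere
  have hQ : ∀ k : ℕ, ‖ps (N0 + k)‖⁻¹ • ps (N0 + k) ∈ sphere (0 : Euc N) 1 := by
    intro k
    have h1 : 0 < ‖ps (N0 + k)‖ := lt_of_lt_of_le (by linarith) (hpn0 _ (Nat.le_add_right _ _))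
    rw [mem_sphere_zero_iff_norm, norm_smul, norm_inv, norm_norm,
      inv_mul_cancel₀ h1.ne']
  obtain ⟨q, hq_sphere, φ, hφ, hQten⟩ := (isCompact_sphere (0:Euc N) 1).tendsto_subseq hQ
  have hqnorm : ‖q‖ = 1 := mem_sphere_zero_iff_norm.1 hq_sphere
  set r : ℝ := η0 / C with hrdef
  have hr : 0 < r := by rw [hrdef]; positivity
  clear_value r
  refine ⟨-q, by rw [norm_neg]; exact hqnorm, ?_⟩
  have hcenter : x0 - r • (-q) = x0 + r • q := by module
  rw [hcenter]
  suffices hopen : ball (x0 + r • q) r ⊆ E by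
    have h1 := closure_mono hopen
    rw [closure_ball _ (ne_of_gt hr), hE.closure_eq] at h1
    exact h1
  intro y hy
  rw [hEeq]
  show (0:ℝ) ≤ v y
  by_contra hvy
  push_neg at hvy
  set ε : ℝ := r - dist y (x0 + r • q) with hεdef
  have hε : 0 < ε := by
    have := mem_ball.1 hy
    rw [hεdef]
    linarith
  clear_value ε
  -- pick a good index
  have hφt : Tendsto φ atTop atTop := hφ.tendsto_atTop
  have hmt : Tendsto (fun k => N0 + φ k) atTop atTop :=
    tendsto_atTop_mono (fun k => Nat.le_add_left (φ k) N0) hφt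
  have hvm : Tendsto (fun k => v (xs (N0 + φ k))) atTop (𝓝 0) := hvxs.comp hmt
  have hA : ∀ᶠ k in atTop, v y < v (xs (N0 + φ k)) :=
    hvm.eventually (eventually_gt_nhds hvy)
  have hB : ∀ᶠ k in atTop, dist (xs (N0 + φ k)) x0 < ε/4 := by
    have h1 : Tendsto (fun k => 1/(((N0 + φ k : ℕ):ℝ)+1)) atTop (𝓝 0) :=
      tendsto_one_div_add_atTop_nhds_zero_nat.comp hmt
    filter_upwards [h1.eventually (eventually_lt_nhds (show (0:ℝ) < ε/4 by positivity))]
      with k hk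
    exact lt_trans (hdist _) hk
  have hCt : ∀ᶠ k in atTop, -(C * (ε/4)) < v (xs (N0 + φ k)) := by
    refine hvm.eventually (eventually_gt_nhds ?_)
    have h9 : (0:ℝ) < C * (ε/4) := by positivity
    linarith
  have hCdir : ∀ᶠ k in atTop,
      ‖(‖ps (N0 + φ k)‖⁻¹ • ps (N0 + φ k)) - q‖ < ε/(4*(r+1)) := by
    have h2 : (0:ℝ) < ε/(4*(r+1)) := by positivity
    have := Metric.tendsto_atTop.1 hQten (ε/(4*(r+1))) h2
    obtain ⟨K, hK⟩ := this
    rw [eventually_atTop]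
    exact ⟨K, fun k hk => by
      have := hK k hk
      rwa [Function.comp_apply, dist_eq_norm] at this⟩
  obtain ⟨k, hk⟩ := (hA.and (hB.and (hCt.and hCdir))).exists
  obtain ⟨hk_A, hk_B, hk_C, hk_D⟩ := hk
  set n := N0 + φ k with hndef
  have hgl := hglob n y
  have hlow := hps_low n
  have hP : η0/2 ≤ ‖ps n‖ := hpn0 n (by rw [hndef]; exact Nat.le_add_right _ _)
  clear_value n
  have hP0 : 0 < ‖ps n‖ := lt_of_lt_of_le (by linarith) hP
  set t : ℝ := min r (‖ps n‖ / C) with htdef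
  have ht0 : 0 < t := by rw [htdef]; exact lt_min hr (by positivity)
  have htr : t ≤ r := by rw [htdef]; exact min_le_left _ _
  have htp : C * t ≤ ‖ps n‖ := by
    have h1 : t ≤ ‖ps n‖ / C := by rw [htdef]; exact min_le_right _ _
    calc C * t ≤ C * (‖ps n‖ / C) := mul_le_mul_of_nonneg_left h1 hC.le
      _ = ‖ps n‖ := by field_simp
  have hrC : r * C = η0 := by rw [hrdef]; field_simp
  have htε : r - t < ε/4 := by
    have h2 : r - ε/4 < ‖ps n‖ / C := by
      rw [lt_div_iff₀ hC]
      nlinarith [hk_C, hlow, hrC]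
    have h3 : r - ε/4 < t := by rw [htdef]; exact lt_min (by linarith) h2
    linarith
  clear_value t
  have hQknorm : ‖(‖ps n‖⁻¹ • ps n)‖ = 1 := by
    rw [norm_smul, norm_inv, norm_norm, inv_mul_cancel₀ hP0.ne']
  -- y lies in the tangent ball around xs n
  have hdistyc : ‖y - (xs n + t • (‖ps n‖⁻¹ • ps n))‖ ≤ t := by
    have k1 : dist y (x0 + r • q) = r - ε := by rw [hεdef]; ring
    have e : (x0 + r • q) - (xs n + t • (‖ps n‖⁻¹ • ps n))
        = (x0 - xs n) + (r • (q - (‖ps n‖⁻¹ • ps n)) + (r - t) • (‖ps n‖⁻¹ • ps n)) := by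
      module
    have k2 : ‖(x0 + r • q) - (xs n + t • (‖ps n‖⁻¹ • ps n))‖
        ≤ ‖x0 - xs n‖ + (r * ‖q - (‖ps n‖⁻¹ • ps n)‖ + (r - t) * 1) := by
      rw [e]
      refine (norm_add_le _ _).trans ?_
      have k3 : ‖r • (q - (‖ps n‖⁻¹ • ps n)) + (r - t) • (‖ps n‖⁻¹ • ps n)‖
          ≤ r * ‖q - (‖ps n‖⁻¹ • ps n)‖ + (r - t) * 1 := by
        refine (norm_add_le _ _).trans ?_
        rw [norm_smul, norm_smul, Real.norm_eq_abs, abs_of_pos hr,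
          Real.norm_eq_abs, abs_of_nonneg (by linarith), hQknorm]
      linarith
    have k4 : ‖x0 - xs n‖ < ε/4 := by
      rw [← dist_eq_norm, dist_comm]
      exact hk_B
    have k5 : r * ‖q - (‖ps n‖⁻¹ • ps n)‖ < ε/4 := by
      have h5 : ‖q - (‖ps n‖⁻¹ • ps n)‖ < ε/(4*(r+1)) := by
        rw [norm_sub_rev]; exact hk_D
      have h6 : r * ‖q - (‖ps n‖⁻¹ • ps n)‖ < r * (ε/(4*(r+1))) :=
        mul_lt_mul_of_pos_left h5 hr
      have h7 : r * (ε/(4*(r+1))) < ε/4 := by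
        rw [← mul_div_assoc, div_lt_div_iff₀ (by positivity) (by norm_num)]
        ring_nf
        nlinarith [hε, hr]
      linarith
    have k6 : dist y (xs n + t • (‖ps n‖⁻¹ • ps n))
        ≤ dist y (x0 + r • q) + ‖(x0 + r • q) - (xs n + t • (‖ps n‖⁻¹ • ps n))‖ := by
      rw [← dist_eq_norm]
      exact dist_triangle _ _ _
    rw [← dist_eq_norm]
    linarith [k1, k2, k4, k5, k6, htε]
  have hdd : ‖(y - xs n) - t • (‖ps n‖⁻¹ • ps n)‖ ≤ t := by
    rw [show (y - xs n) - t • (‖ps n‖⁻¹ • ps n) = y - (xs n + t • (‖ps n‖⁻¹ • ps n)) by module]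
    exact hdistyc
  have hinner := ball_inner_est hC ht0 hP0 htp hdd
  linarith [hgl, hinner, hk_A]
end
end

section
/- Let N ≥ 1, let v : ℝ^N → ℝ be semiconvex with constant C > 0, let η0 > 0, let x ∈ ℝ^N with v(x) = 0, and let p ∈ D⁻v(x) satisfy |p| ≥ η0. Then v(y) ≥ 0 for every y in the open ball B(x + (η0/(C|p|))·p, η0/C); in particular, the closed ball B̄(x + (η0/(C|p|))·p, η0/C) is contained in {z : v(z) ≥ 0}. -/
open Set MeasureTheory Filter Metric
open scoped Topology ENNReal NNReal RealInnerProductSpace symmDiff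

noncomputable section

/-- The Fréchet subdifferential D⁻v(x): the set of p with
liminf_{y→x} (v(y) − v(x) − ⟨p, y−x⟩)/|y−x| ≥ 0. -/
def SubDiff {N : ℕ} (v : Euc N → ℝ) (x : Euc N) : Set (Euc N) :=
  {p | ∀ ε > 0, ∀ᶠ y in 𝓝[≠] x, -ε ≤ (v y - v x - ⟪p, y - x⟫) / ‖y - x‖}

lemma subgrad_ineq {N : ℕ} (v : Euc N → ℝ) (C : ℝ) (hC : 0 < C) (hsc : Semiconvex C v)
    (x p : Euc N) (hp : p ∈ SubDiff v x) (h : Euc N) :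
    v x + ⟪p, h⟫ - C / 2 * ‖h‖ ^ 2 ≤ v (x + h) := by
  rcases eq_or_ne h 0 with rfl | hh
  · simp
  have hnorm : 0 < ‖h‖ := norm_pos_iff.mpr hh
  set w : ℝ → ℝ := fun t => v (x + t • h) + C / 2 * t ^ 2 * ‖h‖ ^ 2 with hw
  have hmid : ∀ s t : ℝ, 2 * w ((s + t) / 2) ≤ w s + w t := by
    intro s t
    have key := hsc (x + ((s + t) / 2) • h) (((t - s) / 2) • h)
    have e1 : x + ((s + t) / 2) • h + ((t - s) / 2) • h = x + t • h := by
      rw [add_assoc, ← add_smul]; ring_nf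
    have e2 : x + ((s + t) / 2) • h - ((t - s) / 2) • h = x + s • h := by
      rw [add_sub_assoc, ← sub_smul]; ring_nf
    have e3 : ‖((t - s) / 2) • h‖ ^ 2 = ((t - s) / 2) ^ 2 * ‖h‖ ^ 2 := by
      rw [norm_smul, mul_pow, Real.norm_eq_abs, sq_abs]
    rw [e1, e2, e3] at key
    simp only [hw]
    nlinarith [key]
  have hiter : ∀ n : ℕ, 2 ^ n * (w ((1 / 2 : ℝ) ^ n) - w 0) ≤ w 1 - w 0 := by
    intro n
    induction n with
    | zero => simp
    | succ n ih =>
      have hm := hmid 0 ((1 / 2 : ℝ) ^ n)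
      have e : (0 + (1 / 2 : ℝ) ^ n) / 2 = (1 / 2 : ℝ) ^ (n + 1) := by ring
      rw [e] at hm
      have h2 : (0 : ℝ) < 2 ^ n := by positivity
      have e2 : (2 : ℝ) ^ (n + 1) = 2 * 2 ^ n := by ring
      have step : (2:ℝ) ^ n * (2 * (w ((1 / 2 : ℝ) ^ (n + 1)) - w 0))
          ≤ 2 ^ n * (w ((1 / 2 : ℝ) ^ n) - w 0) :=
        mul_le_mul_of_nonneg_left (by linarith) h2.le
      rw [e2]
      nlinarith [step, ih]
  have main : ∀ ε > (0 : ℝ), v x + ⟪p, h⟫ - C / 2 * ‖h‖ ^ 2 ≤ v (x + h) + ε := by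
    intro ε hε
    have hε' : 0 < ε / ‖h‖ := by positivity
    have hev := hp (ε / ‖h‖) hε'
    rw [Filter.eventually_iff, Metric.mem_nhdsWithin_iff] at hev
    obtain ⟨δ, hδ, hyp⟩ := hev
    obtain ⟨n, hn⟩ := exists_pow_lt_of_lt_one (show (0:ℝ) < δ / ‖h‖ by positivity)
      (by norm_num : (1 / 2 : ℝ) < 1)
    set t := (1 / 2 : ℝ) ^ n with ht
    have htpos : 0 < t := by positivity
    set y := x + t • h with hy
    have hyx : y - x = t • h := by simp [hy]
    have hyne : y ≠ x := by
      simp only [hy, ne_eq, add_eq_left]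
      exact smul_ne_zero (ne_of_gt htpos) hh
    have hdist : dist y x < δ := by
      rw [dist_eq_norm, hyx, norm_smul, Real.norm_eq_abs, abs_of_pos htpos]
      calc t * ‖h‖ < (δ / ‖h‖) * ‖h‖ := mul_lt_mul_of_pos_right hn hnorm
        _ = δ := by field_simp
    have hq := hyp ⟨by rwa [mem_ball], by simpa using hyne⟩
    simp only [Set.mem_setOf_eq] at hq
    rw [hyx] at hq
    have hny : ‖t • h‖ = t * ‖h‖ := by
      rw [norm_smul, Real.norm_eq_abs, abs_of_pos htpos]
    have hip : ⟪p, t • h⟫ = t * ⟪p, h⟫ := real_inner_smul_right p h t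
    rw [hny, hip] at hq
    have hpos : 0 < t * ‖h‖ := by positivity
    have hd : -ε * t ≤ v y - v x - t * ⟪p, h⟫ := by
      have := mul_le_mul_of_nonneg_right hq hpos.le
      rw [div_mul_cancel₀ _ hpos.ne'] at this
      calc -ε * t = -(ε / ‖h‖) * (t * ‖h‖) := by field_simp
        _ ≤ v y - v x - t * ⟪p, h⟫ := this
    have hit := hiter n
    have w1 : w 1 = v (x + h) + C / 2 * ‖h‖ ^ 2 := by simp [hw]
    have w0 : w 0 = v x := by simp [hw]
    have wt : w t = v y + C / 2 * t ^ 2 * ‖h‖ ^ 2 := by simp [hw, hy]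
    rw [w1, w0, wt] at hit
    have h2t : (2 : ℝ) ^ n * t = 1 := by
      rw [ht, ← mul_pow]; norm_num
    have hmul : (2 : ℝ) ^ n * (-ε * t) ≤ 2 ^ n * (v y - v x - t * ⟪p, h⟫) :=
      mul_le_mul_of_nonneg_left hd (by positivity)
    have e1 : (2 : ℝ) ^ n * (-ε * t) = -ε := by
      rw [show -ε * t = t * -ε by ring, ← mul_assoc, h2t]; ring
    have e2 : (2 : ℝ) ^ n * (v y - v x - t * ⟪p, h⟫)
        = 2 ^ n * (v y - v x) - ⟪p, h⟫ := by
      rw [mul_sub, ← mul_assoc, h2t]; ring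
    rw [e1, e2] at hmul
    have hnn : 0 ≤ (2 : ℝ) ^ n * (C / 2 * t ^ 2 * ‖h‖ ^ 2) := by positivity
    nlinarith [hit, hmul, hnn]
  exact le_of_forall_pos_le_add main

/-- a ball on which a semiconvex function is nonnegative, built from a
subgradient at a zero of the function. -/
theorem stmt16 (N : ℕ) (hN : 1 ≤ N)
    (v : Euc N → ℝ) (C : ℝ) (hC : 0 < C) (hsc : Semiconvex C v)
    (η0 : ℝ) (hη0 : 0 < η0)
    (x : Euc N) (hx : v x = 0)
    (p : Euc N) (hp : p ∈ SubDiff v x) (hpη : η0 ≤ ‖p‖) :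
    (∀ y ∈ ball (x + (η0 / (C * ‖p‖)) • p) (η0 / C), 0 ≤ v y) ∧
    closedBall (x + (η0 / (C * ‖p‖)) • p) (η0 / C) ⊆ {z : Euc N | 0 ≤ v z} := by
  have hpnorm : 0 < ‖p‖ := lt_of_lt_of_le hη0 hpη
  set s := η0 / (C * ‖p‖) with hs
  have hspos : 0 < s := by positivity
  have hsp : s * ‖p‖ = η0 / C := by rw [hs]; field_simp
  have hCsp : C * s * ‖p‖ = η0 := by rw [hs]; field_simp
  have hCs : C * s ≤ 1 := by nlinarith [hCsp, hpη, hpnorm]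
  have key : ∀ y ∈ closedBall (x + s • p) (η0 / C), 0 ≤ v y := by
    intro y hy
    have hvy := subgrad_ineq v C hC hsc x p hp (y - x)
    rw [add_sub_cancel, hx, zero_add] at hvy
    rw [mem_closedBall, dist_eq_norm] at hy
    have hd : y - (x + s • p) = (y - x) - s • p := by abel
    rw [hd] at hy
    have hsq : ‖(y - x) - s • p‖ ^ 2 ≤ (η0 / C) ^ 2 := by
      apply sq_le_sq' _ hy
      linarith [norm_nonneg ((y - x) - s • p)]
    have hexp : ‖(y - x) - s • p‖ ^ 2
        = ‖y - x‖ ^ 2 - 2 * (s * ⟪p, y - x⟫) + s ^ 2 * ‖p‖ ^ 2 := by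
      rw [norm_sub_sq_real, real_inner_smul_right, norm_smul, mul_pow,
        Real.norm_eq_abs, sq_abs, real_inner_comm]
    have heq : (η0 / C) ^ 2 = s ^ 2 * ‖p‖ ^ 2 := by rw [← hsp]; ring
    have hA2sI : ‖y - x‖ ^ 2 ≤ 2 * s * ⟪p, y - x⟫ := by
      rw [hexp, heq] at hsq; linarith
    have hI : 0 ≤ ⟪p, y - x⟫ := by
      nlinarith [hA2sI, sq_nonneg ‖y - x‖, hspos]
    nlinarith [hvy, hA2sI, hI, hCs, mul_le_mul_of_nonneg_left hA2sI (le_of_lt hC),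
      mul_nonneg (sub_nonneg.mpr hCs) hI]
  exact ⟨fun y hy => key y (ball_subset_closedBall hy), fun z hz => key z hz⟩
end
end

section
/- Let N ≥ 1, T > 0, let c : ℝ^N × [0,T] → ℝ be continuous satisfying (H1) with constants L1, L1', let u0 : ℝ^N → ℝ be Lipschitz continuous, and let u be the continuous viscosity solution of u_t = c(x,t)|Du| with initial datum u0. Then for all x ∈ ℝ^N and t ∈ [0,T]: u(x,t) ≤ max_{y : |y − x| ≤ L1' t} u0(y). -/
open Set MeasureTheory Filter Metric
open scoped Topology ENNReal NNReal RealInnerProductSpace symmDiff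

noncomputable section

section Helpers
open InnerProductSpace

-- ψ(s) = (s + √(s²+a²))/2 : smooth approx of s⁺
def psi (a s : ℝ) : ℝ := (s + Real.sqrt (s^2 + a^2)) / 2

lemma sq_add_sq_pos {a s : ℝ} (ha : a ≠ 0) : 0 < s^2 + a^2 := by positivity

lemma psi_nonneg (a s : ℝ) : 0 ≤ psi a s := by
  have h : |s| ≤ Real.sqrt (s^2 + a^2) := by
    rw [← Real.sqrt_sq_eq_abs]
    exact Real.sqrt_le_sqrt (by nlinarith)
  have := abs_nonneg s
  unfold psi
  cases abs_cases s with
  | inl h' => nlinarith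
  | inr h' => nlinarith

lemma le_psi (a s : ℝ) : s ≤ psi a s := by
  have h : |s| ≤ Real.sqrt (s^2 + a^2) := by
    rw [← Real.sqrt_sq_eq_abs]
    exact Real.sqrt_le_sqrt (by nlinarith)
  have := le_abs_self s
  unfold psi; linarith

lemma psi_le {a s : ℝ} (ha : 0 ≤ a) (hs : 0 ≤ s) : psi a s ≤ s + a := by
  have h : Real.sqrt (s^2 + a^2) ≤ s + a := by
    rw [show s + a = Real.sqrt ((s+a)^2) from (Real.sqrt_sq (by linarith)).symm]
    exact Real.sqrt_le_sqrt (by nlinarith)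
  unfold psi; linarith

lemma psi_hasDerivAt {a : ℝ} (ha : a ≠ 0) (s : ℝ) :
    HasDerivAt (psi a) ((1 + s / Real.sqrt (s^2 + a^2)) / 2) s := by
  have hpos : (0:ℝ) < s^2 + a^2 := sq_add_sq_pos ha
  have h1 : HasDerivAt (fun s : ℝ => s^2 + a^2) (2*s) s := by
    simpa using ((hasDerivAt_pow 2 s).add_const (a^2))
  have h2 : HasDerivAt (fun s : ℝ => Real.sqrt (s^2 + a^2))
      ((2*s) / (2 * Real.sqrt (s^2+a^2))) s := by
    simpa [mul_comm] using h1.sqrt (ne_of_gt hpos)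
  have hsq : (0:ℝ) < Real.sqrt (s^2+a^2) := Real.sqrt_pos.2 hpos
  have h3 := ((hasDerivAt_id s).add h2).div_const 2
  refine h3.congr_deriv ?_
  field_simp

lemma psi_deriv_nonneg {a : ℝ} (ha : a ≠ 0) (s : ℝ) :
    0 ≤ (1 + s / Real.sqrt (s^2 + a^2)) / 2 := by
  have hpos : (0:ℝ) < Real.sqrt (s^2+a^2) := Real.sqrt_pos.2 (sq_add_sq_pos ha)
  have h : |s| ≤ Real.sqrt (s^2 + a^2) := by
    rw [← Real.sqrt_sq_eq_abs]; exact Real.sqrt_le_sqrt (by nlinarith)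
  have h2 : -1 ≤ s / Real.sqrt (s^2+a^2) := by
    rw [le_div_iff₀ hpos]
    have := neg_abs_le s
    linarith
  linarith

lemma psi_deriv_le_one {a : ℝ} (ha : a ≠ 0) (s : ℝ) :
    (1 + s / Real.sqrt (s^2 + a^2)) / 2 ≤ 1 := by
  have hpos : (0:ℝ) < Real.sqrt (s^2+a^2) := Real.sqrt_pos.2 (sq_add_sq_pos ha)
  have h : |s| ≤ Real.sqrt (s^2 + a^2) := by
    rw [← Real.sqrt_sq_eq_abs]; exact Real.sqrt_le_sqrt (by nlinarith)
  have h2 : s / Real.sqrt (s^2+a^2) ≤ 1 := by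
    rw [div_le_one hpos]
    have := le_abs_self s
    linarith
  linarith

lemma psi_contDiff {a : ℝ} (ha : a ≠ 0) : ContDiff ℝ 1 (psi a) := by
  rw [contDiff_iff_contDiffAt]
  intro s
  have h1 : ContDiffAt ℝ 1 (fun s : ℝ => s^2 + a^2) s :=
    ((contDiffAt_id).pow 2).add contDiffAt_const
  have h2 : ContDiffAt ℝ 1 (fun s : ℝ => Real.sqrt (s^2 + a^2)) s :=
    h1.sqrt (ne_of_gt (sq_add_sq_pos ha))
  exact ((contDiffAt_id.add h2)).div_const 2

-- gradient of x ↦ G(‖x-z‖²)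
lemma grad_radial {N : ℕ} (z : Euc N) (G : ℝ → ℝ) (x : Euc N) (g : ℝ)
    (hG : HasDerivAt G g (‖x - z‖^2)) :
    HasGradientAt (fun y : Euc N => G (‖y - z‖^2)) ((2*g) • (x - z)) x := by
  have hid : HasFDerivAt (fun y : Euc N => y - z) (ContinuousLinearMap.id ℝ (Euc N)) x := by
    simpa using (hasFDerivAt_id x).sub_const z
  have hinner : HasFDerivAt (fun y : Euc N => ⟪y - z, y - z⟫)
      ((fderivInnerCLM ℝ (x - z, x - z)).comp
        ((ContinuousLinearMap.id ℝ (Euc N)).prod (ContinuousLinearMap.id ℝ (Euc N)))) x :=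
    hid.inner ℝ hid
  have hnorm : HasFDerivAt (fun y : Euc N => ‖y - z‖^2)
      ((fderivInnerCLM ℝ (x - z, x - z)).comp
        ((ContinuousLinearMap.id ℝ (Euc N)).prod (ContinuousLinearMap.id ℝ (Euc N)))) x := by
    have : (fun y : Euc N => ‖y - z‖^2) = fun y : Euc N => ⟪y - z, y - z⟫ := by
      funext y; rw [real_inner_self_eq_norm_sq]
    rw [this]; exact hinner
  have hcomp := hG.comp_hasFDerivAt x hnorm
  rw [hasGradientAt_iff_hasFDerivAt]
  refine hcomp.congr_fderiv ?_
  ext y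
  simp only [toDual_apply_apply, ContinuousLinearMap.coe_smul', Pi.smul_apply,
    ContinuousLinearMap.coe_comp', Function.comp_apply, ContinuousLinearMap.prod_apply,
    ContinuousLinearMap.coe_id', id_eq, fderivInnerCLM_apply, smul_eq_mul]
  rw [real_inner_smul_left, real_inner_comm (x - z) y]
  ring

variable {N : ℕ} (x0 : Euc N) (t0 M ε A lam δ a L1' : ℝ)

def phi (x : Euc N) (t : ℝ) : ℝ :=
  M + ε + ε * Real.exp (lam*(t-t0)) +
    A * psi a (Real.sqrt (δ^2 + ‖x-x0‖^2) + L1'*(t-t0))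

lemma phi_contDiff (hδ : δ ≠ 0) (ha : a ≠ 0) :
    ContDiff ℝ 1 (fun p : Euc N × ℝ => phi x0 t0 M ε A lam δ a L1' p.1 p.2) := by
  unfold phi
  have hsq : ContDiff ℝ 1 (fun p : Euc N × ℝ => δ^2 + ‖p.1 - x0‖^2) :=
    contDiff_const.add ((contDiff_fst.sub contDiff_const).norm_sq ℝ)
  have hsqrt : ContDiff ℝ 1 (fun p : Euc N × ℝ => Real.sqrt (δ^2 + ‖p.1 - x0‖^2)) := by
    rw [contDiff_iff_contDiffAt]
    intro p
    exact (hsq.contDiffAt).sqrt (by positivity)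
  have hlin : ContDiff ℝ 1 (fun p : Euc N × ℝ => L1'*(p.2 - t0)) :=
    contDiff_const.mul (contDiff_snd.sub contDiff_const)
  have hpsi : ContDiff ℝ 1 (fun p : Euc N × ℝ =>
      psi a (Real.sqrt (δ^2 + ‖p.1 - x0‖^2) + L1'*(p.2 - t0))) :=
    (psi_contDiff ha).comp (hsqrt.add hlin)
  have hexp : ContDiff ℝ 1 (fun p : Euc N × ℝ => Real.exp (lam*(p.2 - t0))) :=
    Real.contDiff_exp.comp (contDiff_const.mul (contDiff_snd.sub contDiff_const))
  exact (contDiff_const.add (contDiff_const.mul hexp)).add (contDiff_const.mul hpsi)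

lemma phi_deriv_t (ha : a ≠ 0) (x : Euc N) (t : ℝ) :
    HasDerivAt (phi x0 t0 M ε A lam δ a L1' x)
      (ε * (lam * Real.exp (lam*(t-t0))) +
        A * ((1 + (Real.sqrt (δ^2 + ‖x-x0‖^2) + L1'*(t-t0)) /
          Real.sqrt ((Real.sqrt (δ^2 + ‖x-x0‖^2) + L1'*(t-t0))^2 + a^2)) / 2 * L1')) t := by
  set b := Real.sqrt (δ^2 + ‖x-x0‖^2) with hb
  have h1 : HasDerivAt (fun t : ℝ => lam*(t-t0)) lam t := by
    simpa using ((hasDerivAt_id t).sub_const t0).const_mul lam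
  have h2 : HasDerivAt (fun t : ℝ => Real.exp (lam*(t-t0)))
      (Real.exp (lam*(t-t0)) * lam) t := (Real.hasDerivAt_exp _).comp t h1
  have h3 : HasDerivAt (fun t : ℝ => b + L1'*(t-t0)) L1' t := by
    simpa using (((hasDerivAt_id t).sub_const t0).const_mul L1').const_add b
  have h4 := (psi_hasDerivAt ha (b + L1'*(t-t0))).comp t h3
  have := ((h2.const_mul ε).const_add (M + ε)).add (h4.const_mul A)
  refine this.congr_deriv ?_
  ring

lemma phi_gradient (hδ : δ ≠ 0) (ha : a ≠ 0) (x : Euc N) (t : ℝ) :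
    HasGradientAt (fun y => phi x0 t0 M ε A lam δ a L1' y t)
      ((A * ((1 + (Real.sqrt (δ^2 + ‖x-x0‖^2) + L1'*(t-t0)) /
          Real.sqrt ((Real.sqrt (δ^2 + ‖x-x0‖^2) + L1'*(t-t0))^2 + a^2)) / 2) /
          Real.sqrt (δ^2 + ‖x-x0‖^2)) • (x - x0)) x := by
  have hbpos : (0:ℝ) < Real.sqrt (δ^2 + ‖x-x0‖^2) := Real.sqrt_pos.2 (by positivity)
  set r := ‖x-x0‖^2 with hr
  -- G s = M + ε + ε * exp(lam*(t-t0)) + A * psi a (√(δ²+s) + L1'*(t-t0))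
  set G : ℝ → ℝ := fun s => M + ε + ε * Real.exp (lam*(t-t0)) +
    A * psi a (Real.sqrt (δ^2 + s) + L1'*(t-t0)) with hG
  have hGr : HasDerivAt G
      (A * ((1 + (Real.sqrt (δ^2 + r) + L1'*(t-t0)) /
        Real.sqrt ((Real.sqrt (δ^2 + r) + L1'*(t-t0))^2 + a^2)) / 2 *
        (1 / (2 * Real.sqrt (δ^2 + r))))) r := by
    have h1 : HasDerivAt (fun s : ℝ => δ^2 + s) 1 r := by
      simpa using (hasDerivAt_id r).const_add (δ^2)
    have h2 : HasDerivAt (fun s : ℝ => Real.sqrt (δ^2 + s))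
        (1 / (2 * Real.sqrt (δ^2 + r))) r := by
      simpa using h1.sqrt (by positivity)
    have h3 : HasDerivAt (fun s : ℝ => Real.sqrt (δ^2 + s) + L1'*(t-t0))
        (1 / (2 * Real.sqrt (δ^2 + r))) r := h2.add_const _
    have h4 := (psi_hasDerivAt ha (Real.sqrt (δ^2 + r) + L1'*(t-t0))).comp r h3
    exact ((h4.const_mul A).const_add (M + ε + ε * Real.exp (lam*(t-t0))))
  have := grad_radial x0 G x _ hGr
  have heq : (fun y : Euc N => G (‖y - x0‖^2)) =
      fun y => phi x0 t0 M ε A lam δ a L1' y t := rfl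
  rw [heq] at this
  convert this using 2
  rw [hr]
  field_simp

end Helpers

lemma u0_cone_bound {N : ℕ} (u0 : Euc N → ℝ) (K : ℝ≥0) (hu0 : LipschitzWith K u0)
    (x0 : Euc N) (ρ : ℝ) (hρ : 0 ≤ ρ) (M : ℝ)
    (hM : ∀ y ∈ closedBall x0 ρ, u0 y ≤ M) (A : ℝ) (hAK : (K:ℝ) ≤ A) :
    ∀ y, u0 y ≤ M + A * max 0 (‖y - x0‖ - ρ) := by
  intro y
  have hK0 : (0:ℝ) ≤ K := K.coe_nonneg
  have hA0 : 0 ≤ A := le_trans hK0 hAK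
  by_cases h : ‖y - x0‖ ≤ ρ
  · have h1 : u0 y ≤ M := hM y (by rwa [mem_closedBall, dist_eq_norm])
    have h2 : 0 ≤ max 0 (‖y - x0‖ - ρ) := le_max_left _ _
    nlinarith
  · push_neg at h
    set r := ‖y - x0‖ with hr
    have hrpos : 0 < r := lt_of_le_of_lt hρ h
    set z := x0 + (ρ/r) • (y - x0) with hz
    have hz1 : ‖z - x0‖ = ρ := by
      have : z - x0 = (ρ/r) • (y - x0) := by rw [hz]; abel
      rw [this, norm_smul, ← hr, Real.norm_eq_abs,
        abs_of_nonneg (div_nonneg hρ hrpos.le), div_mul_cancel₀ _ hrpos.ne']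
    have hyz : ‖y - z‖ = r - ρ := by
      have : y - z = (1 - ρ/r) • (y - x0) := by
        rw [hz, sub_smul, one_smul]; abel
      rw [this, norm_smul, ← hr, Real.norm_eq_abs]
      rw [abs_of_nonneg (by rw [sub_nonneg, div_le_one hrpos]; exact h.le)]
      field_simp
    have h1 : u0 z ≤ M := hM z (by rw [mem_closedBall, dist_eq_norm, hz1])
    have h2 : u0 y - u0 z ≤ K * ‖y - z‖ := by
      have := hu0.dist_le_mul y z
      rw [Real.dist_eq] at this
      calc u0 y - u0 z ≤ |u0 y - u0 z| := le_abs_self _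
        _ ≤ K * dist y z := this
        _ = K * ‖y - z‖ := by rw [dist_eq_norm]
    rw [hyz] at h2
    have h3 : max 0 (r - ρ) = r - ρ := max_eq_right (by linarith)
    have h4 : (K:ℝ) * (r - ρ) ≤ A * (r - ρ) := by nlinarith
    rw [h3]
    linarith

set_option maxHeartbeats 2000000 in
lemma key_bound (N : ℕ) (T : ℝ) (hT : 0 < T)
    (c : Euc N → ℝ → ℝ) (L1' : ℝ) (hL1' : 0 < L1')
    (hH1 : ∀ x : Euc N, ∀ t ∈ Set.Icc (0:ℝ) T, |c x t| ≤ L1')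
    (u0 : Euc N → ℝ) (K : ℝ≥0) (hu0 : LipschitzWith K u0)
    (u : Euc N → ℝ → ℝ)
    (huc : ContinuousOn (fun p : Euc N × ℝ => u p.1 p.2)
      ((Set.univ : Set (Euc N)) ×ˢ Set.Icc (0:ℝ) T))
    (husol : IsViscositySolution N T c u u0)
    (x0 : Euc N) (t0 : ℝ) (ht0 : t0 ∈ Set.Ioo 0 T) :
    u x0 t0 ≤ sSup (u0 '' closedBall x0 (L1' * t0)) := by
  obtain ⟨ht0pos, ht0T⟩ := ht0
  set M := sSup (u0 '' closedBall x0 (L1' * t0)) with hM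
  -- boundedness of u0 on balls and basic sSup facts
  have hball_bdd : ∀ ρ : ℝ, 0 ≤ ρ → ∀ y ∈ closedBall x0 ρ, u0 y ≤ u0 x0 + K * ρ := by
    intro ρ hρ y hy
    have h1 := hu0.dist_le_mul y x0
    rw [Real.dist_eq] at h1
    have h2 : |u0 y - u0 x0| ≤ K * ρ := by
      refine h1.trans ?_
      have : dist y x0 ≤ ρ := hy
      nlinarith [K.coe_nonneg]
    have := le_abs_self (u0 y - u0 x0)
    linarith
  have hρ0 : (0:ℝ) ≤ L1' * t0 := by positivity
  have hbddM : BddAbove (u0 '' closedBall x0 (L1' * t0)) :=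
    ⟨u0 x0 + K * (L1' * t0), by rintro v ⟨y, hy, rfl⟩; exact hball_bdd _ hρ0 y hy⟩
  have hMup : ∀ y ∈ closedBall x0 (L1' * t0), u0 y ≤ M := fun y hy =>
    le_csSup hbddM (mem_image_of_mem u0 hy)
  -- it suffices to prove u x0 t0 ≤ M + 3ε for all ε > 0
  have key : ∀ ε : ℝ, 0 < ε → u x0 t0 ≤ M + 3 * ε := by
    intro ε hε
    set T' := (t0 + T) / 2 with hT'
    have hT'1 : t0 < T' := by rw [hT']; linarith
    have hT'2 : T' < T := by rw [hT']; linarith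
    have hT'pos : 0 < T' := lt_trans ht0pos hT'1
    set R := L1' * T + 1 with hR
    have hRpos : 0 < R := by positivity
    -- bound for u on the compact cylinder
    set Qc := closedBall x0 R ×ˢ Icc (0:ℝ) T with hQc
    have hQcc : IsCompact Qc := (isCompact_closedBall _ _).prod isCompact_Icc
    have hucQc : ContinuousOn (fun p : Euc N × ℝ => u p.1 p.2) Qc :=
      huc.mono (prod_mono (subset_univ _) subset_rfl)
    obtain ⟨C₀, hC₀⟩ := (hQcc.image_of_continuousOn hucQc).bddAbove
    set C := max C₀ M with hC
    have hCu : ∀ p ∈ Qc, u p.1 p.2 ≤ C := fun p hp =>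
      le_trans (hC₀ (mem_image_of_mem _ hp)) (le_max_left _ _)
    have hCM : M ≤ C := le_max_right _ _
    -- constants
    set A := (K:ℝ) + (C - M) + 1 with hA
    have hApos : 0 < A := by have := K.coe_nonneg; rw [hA]; linarith
    have hAK : (K:ℝ) ≤ A := by rw [hA]; linarith
    have hACM : C - M + 1 ≤ A := by have := K.coe_nonneg; rw [hA]; linarith
    set lam := max 1 ((C - M) / (ε * (T' - t0))) with hlam
    have hlam1 : (1:ℝ) ≤ lam := le_max_left _ _
    have hlampos : 0 < lam := lt_of_lt_of_le one_pos hlam1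
    have hlam2 : C - M ≤ ε * lam * (T' - t0) := by
      have h1 : (C - M) / (ε * (T' - t0)) ≤ lam := le_max_right _ _
      have h2 : 0 < ε * (T' - t0) := by nlinarith
      calc C - M = (C - M) / (ε * (T' - t0)) * (ε * (T' - t0)) := (div_mul_cancel₀ _ h2.ne').symm
        _ ≤ lam * (ε * (T' - t0)) := by nlinarith
        _ = ε * lam * (T' - t0) := by ring
    set δ := ε / (2 * A) with hδdef
    have hδpos : 0 < δ := by positivity
    have hδne : δ ≠ 0 := ne_of_gt hδpos
    set Φ := phi x0 t0 M ε A lam δ δ L1' with hΦ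
    -- sqrt facts
    have hsqrt_ge : ∀ rr : ℝ, 0 ≤ rr → rr ≤ Real.sqrt (δ^2 + rr^2) := by
      intro rr hrr
      calc rr = Real.sqrt (rr^2) := (Real.sqrt_sq hrr).symm
        _ ≤ Real.sqrt (δ^2 + rr^2) := Real.sqrt_le_sqrt (by nlinarith)
    -- the cone upper bound on u0
    have hu0M := u0_cone_bound u0 K hu0 x0 (L1' * t0) hρ0 M hMup A hAK
    -- comparison on Q
    set Q := closedBall x0 R ×ˢ Icc (0:ℝ) T' with hQdef
    have hcomp : ∀ p ∈ Q, u p.1 p.2 ≤ Φ p.1 p.2 := by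
      by_contra hcon
      push_neg at hcon
      obtain ⟨p₀, hp₀Q, hp₀⟩ := hcon
      have hQc2 : IsCompact Q := (isCompact_closedBall _ _).prod isCompact_Icc
      have hQsub : Q ⊆ (univ : Set (Euc N)) ×ˢ Icc (0:ℝ) T :=
        prod_mono (subset_univ _) (Icc_subset_Icc le_rfl hT'2.le)
      have hQQc : Q ⊆ Qc := prod_mono subset_rfl (Icc_subset_Icc le_rfl hT'2.le)
      set w := fun p : Euc N × ℝ => u p.1 p.2 - Φ p.1 p.2 with hw
      have hwc : ContinuousOn w Q := by
        apply ContinuousOn.sub (huc.mono hQsub)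
        exact ((phi_contDiff x0 t0 M ε A lam δ δ L1' hδne hδne).continuous).continuousOn
      obtain ⟨⟨xb, tb⟩, hpQ, hpmax'⟩ := hQc2.exists_isMaxOn ⟨p₀, hp₀Q⟩ hwc
      have hpmax : ∀ q ∈ Q, w q ≤ w (xb, tb) := fun q hq => hpmax' hq
      have hwpos : 0 < w (xb, tb) := lt_of_lt_of_le (by simpa [hw] using sub_pos.2 hp₀) (hpmax p₀ hp₀Q)
      obtain ⟨hxbQ, htbQ⟩ := mem_prod.1 hpQ
      have hxbR : dist xb x0 ≤ R := hxbQ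
      have htb0 : 0 ≤ tb := htbQ.1
      have htbT' : tb ≤ T' := htbQ.2
      -- lower bounds on Φ
      have hexp_pos : ∀ t : ℝ, 0 < ε * Real.exp (lam*(t-t0)) := fun t => by positivity
      -- (i) tb ≠ 0
      have htbne0 : tb ≠ 0 := by
        intro h0
        have hr : (0:ℝ) ≤ ‖xb - x0‖ := norm_nonneg _
        have h1 : u xb 0 = u0 xb := husol.1 xb
        have hs : ‖xb - x0‖ - L1' * t0 ≤ Real.sqrt (δ^2 + ‖xb-x0‖^2) + L1'*(0-t0) := by
          have := hsqrt_ge ‖xb - x0‖ hr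
          have : ‖xb - x0‖ ≤ Real.sqrt (δ^2 + ‖xb-x0‖^2) := this
          nlinarith
        have hpsi1 : max 0 (‖xb - x0‖ - L1' * t0) ≤
            psi δ (Real.sqrt (δ^2 + ‖xb-x0‖^2) + L1'*(0-t0)) := by
          apply max_le (psi_nonneg _ _) (le_trans hs (le_psi _ _))
        have hφlb : M + ε + A * max 0 (‖xb - x0‖ - L1' * t0) ≤ Φ xb 0 := by
          have h2 := hexp_pos 0
          have h3 : A * max 0 (‖xb - x0‖ - L1' * t0) ≤
              A * psi δ (Real.sqrt (δ^2 + ‖xb-x0‖^2) + L1'*(0-t0)) := by nlinarith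
          simp only [hΦ, phi]
          nlinarith
        have := hu0M xb
        have hw0 : w (xb, 0) < 0 := by
          show u xb 0 - Φ xb 0 < 0
          rw [h1]; linarith
        rw [← h0] at hw0
        linarith
      -- (ii) tb ≠ T'
      have htbneT' : tb ≠ T' := by
        intro hTb
        have h1 : u xb T' ≤ C := hCu (xb, T') ⟨hxbR, ⟨hT'pos.le, hT'2.le⟩⟩
        have h2 : ε * (lam*(T'-t0)) + ε ≤ ε * Real.exp (lam*(T'-t0)) := by
          have := Real.add_one_le_exp (lam*(T'-t0))
          nlinarith
        have h3 : C - M ≤ ε * (lam * (T' - t0)) := by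
          have := hlam2; nlinarith
        have h4 : 0 ≤ A * psi δ (Real.sqrt (δ^2 + ‖xb-x0‖^2) + L1'*(T'-t0)) := by
          have := psi_nonneg δ (Real.sqrt (δ^2 + ‖xb-x0‖^2) + L1'*(T'-t0))
          nlinarith
        have hφlb : C + 2*ε ≤ Φ xb T' := by
          simp only [hΦ, phi]; nlinarith
        have hw0 : w (xb, T') < 0 := by show u xb T' - Φ xb T' < 0; linarith
        rw [← hTb] at hw0
        linarith
      -- (iii) dist xb x0 < R
      have hxblt : dist xb x0 < R := by
        rcases lt_or_eq_of_le hxbR with h | h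
        · exact h
        · exfalso
          have hrn : ‖xb - x0‖ = R := by rw [← dist_eq_norm]; exact h
          have h1 : u xb tb ≤ C := hCu (xb, tb) ⟨hxbR, ⟨htb0, le_trans htbT' hT'2.le⟩⟩
          have hs : R - L1' * T ≤ Real.sqrt (δ^2 + ‖xb-x0‖^2) + L1'*(tb-t0) := by
            have h2 : ‖xb - x0‖ ≤ Real.sqrt (δ^2 + ‖xb-x0‖^2) :=
              hsqrt_ge _ (norm_nonneg _)
            have h2' : R ≤ Real.sqrt (δ^2 + ‖xb-x0‖^2) := hrn ▸ h2
            have h3 : -(L1' * T) ≤ L1' * (tb - t0) := by nlinarith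
            linarith
          have hR1 : R - L1' * T = 1 := by rw [hR]; ring
          have h4 : (1:ℝ) ≤ psi δ (Real.sqrt (δ^2 + ‖xb-x0‖^2) + L1'*(tb-t0)) := by
            refine le_trans ?_ (le_psi _ _)
            linarith
          have h5 : A ≤ A * psi δ (Real.sqrt (δ^2 + ‖xb-x0‖^2) + L1'*(tb-t0)) := by
            nlinarith
          have hφlb : C + ε < Φ xb tb := by
            have := hexp_pos tb
            simp only [hΦ, phi]; nlinarith
          have hw0 : w (xb, tb) < 0 := by show u xb tb - Φ xb tb < 0; linarith
          linarith
      have htbpos : 0 < tb := lt_of_le_of_ne htb0 (Ne.symm htbne0)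
      have htbltT' : tb < T' := lt_of_le_of_ne htbT' htbneT'
      have htbT : tb < T := lt_trans htbltT' hT'2
      -- local max on univ ×ˢ Icc 0 T
      have hloc : IsLocalMaxOn (fun p : Euc N × ℝ => u p.1 p.2 - Φ p.1 p.2)
          (univ ×ˢ Icc (0:ℝ) T) (xb, tb) := by
        have hVmem : (ball xb (R - dist xb x0) ×ˢ Iio T') ∈ 𝓝 ((xb, tb) : Euc N × ℝ) :=
          prod_mem_nhds (ball_mem_nhds _ (by linarith)) (Iio_mem_nhds htbltT')
        have hVmem' : (ball xb (R - dist xb x0) ×ˢ Iio T') ∈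
            𝓝[(univ : Set (Euc N)) ×ˢ Icc (0:ℝ) T] ((xb, tb) : Euc N × ℝ) :=
          nhdsWithin_le_nhds hVmem
        filter_upwards [hVmem', self_mem_nhdsWithin] with q hqV hqS
        obtain ⟨hq1, hq2⟩ := mem_prod.1 hqV
        obtain ⟨_, hq4⟩ := mem_prod.1 hqS
        have hqQ : q ∈ Q := by
          refine mem_prod.2 ⟨?_, ⟨hq4.1, le_of_lt hq2⟩⟩
          have := mem_ball.1 hq1
          have := dist_triangle q.1 xb x0
          rw [mem_closedBall]
          linarith
        exact hpmax q hqQ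
      -- apply the viscosity subsolution property
      have hvisc := (husol.2 Φ (phi_contDiff x0 t0 M ε A lam δ δ L1' hδne hδne) xb tb
        ⟨htbpos, htbT⟩).1 hloc
      -- compute deriv and gradient
      set b := Real.sqrt (δ^2 + ‖xb-x0‖^2) with hb
      have hbpos : 0 < b := Real.sqrt_pos.2 (by positivity)
      set s := b + L1'*(tb-t0) with hs
      set D := (1 + s / Real.sqrt (s^2 + δ^2)) / 2 with hD
      have hD0 : 0 ≤ D := psi_deriv_nonneg hδne s
      have hD1 : D ≤ 1 := psi_deriv_le_one hδne s
      have hderiv : deriv (Φ xb) tb = ε * (lam * Real.exp (lam*(tb-t0))) + A * (D * L1') :=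
        (phi_deriv_t x0 t0 M ε A lam δ δ L1' hδne xb tb).deriv
      have hgrad : gradient (fun x => Φ x tb) xb = ((A * D) / b) • (xb - x0) :=
        (phi_gradient x0 t0 M ε A lam δ δ L1' hδne hδne xb tb).gradient
      have hgnorm : ‖gradient (fun x => Φ x tb) xb‖ = (A * D) / b * ‖xb - x0‖ := by
        rw [hgrad, norm_smul, Real.norm_eq_abs, abs_of_nonneg (by positivity)]
      have hcb : |c xb tb| ≤ L1' := hH1 xb tb ⟨htb0, htbT.le⟩
      have hgle : (A * D) / b * ‖xb - x0‖ ≤ A * D := by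
        have h1 : ‖xb - x0‖ ≤ b := hsqrt_ge _ (norm_nonneg _)
        rw [div_mul_eq_mul_div, div_le_iff₀ hbpos]
        nlinarith [mul_le_mul_of_nonneg_left h1 (mul_nonneg hApos.le hD0)]
      have hrhs : c xb tb * ‖gradient (fun x => Φ x tb) xb‖ ≤ L1' * (A * D) := by
        rw [hgnorm]
        have h1 : c xb tb * ((A * D) / b * ‖xb - x0‖) ≤
            |c xb tb| * ((A * D) / b * ‖xb - x0‖) := by
          have h2 : 0 ≤ (A * D) / b * ‖xb - x0‖ := by positivity
          nlinarith [le_abs_self (c xb tb)]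
        refine h1.trans ?_
        have hX0 : 0 ≤ (A * D) / b * ‖xb - x0‖ := by positivity
        calc |c xb tb| * ((A * D) / b * ‖xb - x0‖)
            ≤ L1' * ((A * D) / b * ‖xb - x0‖) := mul_le_mul_of_nonneg_right hcb hX0
          _ ≤ L1' * (A * D) := mul_le_mul_of_nonneg_left hgle hL1'.le
      have hlhs : L1' * (A * D) < deriv (Φ xb) tb := by
        rw [hderiv]
        have := hexp_pos tb
        have h1 : 0 < ε * (lam * Real.exp (lam*(tb-t0))) := by positivity
        nlinarith
      linarith
    -- conclude: (x0, t0) ∈ Q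
    have hx0Q : ((x0, t0) : Euc N × ℝ) ∈ Q := by
      refine mem_prod.2 ⟨?_, ⟨ht0pos.le, hT'1.le⟩⟩
      rw [mem_closedBall, dist_self]; exact hRpos.le
    have h1 := hcomp (x0, t0) hx0Q
    have h2 : Φ x0 t0 ≤ M + 3 * ε := by
      have hnorm0 : ‖x0 - x0‖ = 0 := by simp
      have hsq : Real.sqrt (δ^2 + ‖x0-x0‖^2) = δ := by
        rw [hnorm0]; simp [Real.sqrt_sq hδpos.le]
      have hexp0 : Real.exp (lam*(t0-t0)) = 1 := by simp
      have hpsi0 : psi δ (Real.sqrt (δ^2 + ‖x0-x0‖^2) + L1'*(t0-t0)) ≤ 2 * δ := by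
        rw [hsq]
        have : δ + L1' * (t0 - t0) = δ := by ring
        rw [this]
        have := psi_le hδpos.le hδpos.le
        linarith
      have hAδ : A * (2 * δ) = ε := by rw [hδdef]; field_simp
      simp only [hΦ, phi, hexp0]
      nlinarith
    linarith
  -- finish with ε → 0
  by_contra hcon
  push_neg at hcon
  set d := u x0 t0 - M with hd
  have hdpos : 0 < d := sub_pos.2 hcon
  have := key (d/6) (by linarith)
  rw [hd] at this
  linarith

/-- Oleinik–Lax type upper bound for the solution. -/
theorem stmt18 (N : ℕ) (hN : 1 ≤ N) (T : ℝ) (hT : 0 < T)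
    (c : Euc N → ℝ → ℝ)
    (hc : ContinuousOn (fun p : Euc N × ℝ => c p.1 p.2)
      ((Set.univ : Set (Euc N)) ×ˢ Set.Icc (0 : ℝ) T))
    (L1 L1' : ℝ) (hL1 : 0 < L1) (hL1' : 0 < L1')
    (hH1 : ∀ x y : Euc N, ∀ t ∈ Set.Icc (0 : ℝ) T,
      |c x t - c y t| ≤ L1 * ‖x - y‖ ∧ |c x t| ≤ L1')
    (u0 : Euc N → ℝ) (K : ℝ≥0) (hu0 : LipschitzWith K u0)
    (u : Euc N → ℝ → ℝ)
    (huc : ContinuousOn (fun p : Euc N × ℝ => u p.1 p.2)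
      ((Set.univ : Set (Euc N)) ×ˢ Set.Icc (0 : ℝ) T))
    (husol : IsViscositySolution N T c u u0) :
    ∀ x : Euc N, ∀ t ∈ Set.Icc (0 : ℝ) T,
      u x t ≤ sSup (u0 '' closedBall x (L1' * t)) := by

  intro x t ht
  have hH1' : ∀ x : Euc N, ∀ t ∈ Set.Icc (0:ℝ) T, |c x t| ≤ L1' :=
    fun x' t' ht' => (hH1 x' x' t' ht').2
  have hbdd : ∀ ρ : ℝ, 0 ≤ ρ → BddAbove (u0 '' closedBall x ρ) := by
    intro ρ hρ
    refine ⟨u0 x + K * ρ, ?_⟩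
    rintro v ⟨y, hy, rfl⟩
    have h1 := hu0.dist_le_mul y x
    rw [Real.dist_eq] at h1
    have h2 : dist y x ≤ ρ := hy
    have h3 : |u0 y - u0 x| ≤ K * ρ := h1.trans (by nlinarith [K.coe_nonneg])
    have := le_abs_self (u0 y - u0 x)
    linarith
  rcases eq_or_lt_of_le ht.1 with h0 | h0
  · -- t = 0
    rw [← h0, mul_zero, closedBall_zero, image_singleton, csSup_singleton]
    exact le_of_eq (husol.1 x)
  · rcases lt_or_eq_of_le ht.2 with hlt | heq
    · exact key_bound N T hT c L1' hL1' hH1' u0 K hu0 u huc husol x t ⟨h0, hlt⟩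
    · -- t = T
      subst heq
      have hmono : ∀ s ∈ Ioo (0:ℝ) t, u x s ≤ sSup (u0 '' closedBall x (L1' * t)) := by
        intro s hs
        refine (key_bound N t hT c L1' hL1' hH1' u0 K hu0 u huc husol x s hs).trans ?_
        refine csSup_le_csSup (hbdd _ (mul_nonneg hL1'.le hT.le)) ?_ ?_
        · exact ⟨u0 x, mem_image_of_mem _
            (mem_closedBall_self (mul_nonneg hL1'.le hs.1.le))⟩
        · exact image_mono (closedBall_subset_closedBall
            (mul_le_mul_of_nonneg_left hs.2.le hL1'.le))
      have hcont : ContinuousOn (fun s : ℝ => u x s) (Icc 0 t) := by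
        have : (fun s : ℝ => u x s) =
            (fun p : Euc N × ℝ => u p.1 p.2) ∘ (fun s : ℝ => ((x, s) : Euc N × ℝ)) := rfl
        rw [this]
        exact huc.comp ((continuous_const.prodMk continuous_id).continuousOn)
          (fun s hs => ⟨mem_univ _, hs⟩)
      have hcw : ContinuousWithinAt (fun s : ℝ => u x s) (Ioo 0 t) t :=
        (hcont t ⟨hT.le, le_rfl⟩).mono Ioo_subset_Icc_self
      have hne : (𝓝[Ioo (0:ℝ) t] t).NeBot := by
        refine mem_closure_iff_nhdsWithin_neBot.mp ?_
        rw [closure_Ioo (ne_of_lt hT)]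
        exact ⟨hT.le, le_rfl⟩
      exact le_of_tendsto hcw (eventually_mem_nhdsWithin.mono (fun s hs => hmono s hs))
end
end
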